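/- arXiv:2007.08483 — 5 statements merged into one kernel-verified Lean document; each statement's English description precedes it below -/
import Mathlib

section
/- Let p_1, p_2, ... be independent identically distributed random variables with values in the interval [ε₀, 1] for some ε₀ > 0, with mean μ = E[p_1] and variance σ² = Var(p_1), and let p̄_n = (1/n)·∑_{i=1}^n p_i. Then the model-average negative log-likelihood NLL_n = E[−log p̄_n] satisfies NLL_n = −log μ + (σ²/(2μ²))·(1/n) + O(1/n²); that is, there exists a constant C > 0 such that for every positive integer n, |E[−log p̄_n] + log μ − σ²/(2μ²·n)| ≤ C/n². -/
open MeasureTheory ProbabilityTheory Filter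

lemma log_taylor_aux {ε₀ t : ℝ} (hε : 0 < ε₀) (hε1 : ε₀ ≤ 1) (ht : ε₀ ≤ 1 + t) :
    |Real.log (1 + t) - (t - t ^ 2 / 2 + t ^ 3 / 3)| ≤ t ^ 4 / ε₀ := by
  set f : ℝ → ℝ := fun s => Real.log (1 + s) - (s - s ^ 2 / 2 + s ^ 3 / 3) with hf
  set D : Set ℝ := Set.Icc (min 0 t) (max 0 t) with hD
  have hmin : ε₀ ≤ 1 + min 0 t := by
    rcases le_total 0 t with h | h
    · simpa [min_eq_left h] using hε1
    · simpa [min_eq_right h] using ht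
  have hpos : ∀ s ∈ D, 0 < 1 + s := fun s hs => lt_of_lt_of_le hε (by
    have : min 0 t ≤ s := hs.1; linarith)
  have hderiv : ∀ s ∈ D, HasDerivAt f (-(s ^ 3) / (1 + s)) s := by
    intro s hs
    have h1 : (0:ℝ) < 1 + s := hpos s hs
    have hlog : HasDerivAt (fun s : ℝ => Real.log (1 + s)) (1 / (1 + s)) s := by
      simpa using (HasDerivAt.log ((hasDerivAt_id s).const_add 1) h1.ne')
    have hpoly : HasDerivAt (fun s : ℝ => s - s ^ 2 / 2 + s ^ 3 / 3)
        (1 - (2 : ℕ) * s ^ 1 / 2 + (3 : ℕ) * s ^ 2 / 3) s := by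
      exact (((hasDerivAt_id s).sub ((hasDerivAt_pow 2 s).div_const 2)).add
        ((hasDerivAt_pow 3 s).div_const 3))
    have := hlog.sub hpoly
    refine HasDerivAt.congr_deriv this ?_
    push_cast
    field_simp
    ring
  have hbound : ∀ s ∈ D, ‖-(s ^ 3) / (1 + s)‖ ≤ |t| ^ 3 / ε₀ := by
    intro s hs
    have h1 : ε₀ ≤ 1 + s := le_trans hmin (by linarith [hs.1])
    have hst : |s| ≤ |t| := by
      rw [abs_le]
      constructor
      · calc -|t| ≤ min 0 t := by rcases le_total 0 t with h | h <;> simp [abs_of_nonneg, abs_of_nonpos, h] <;> linarith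
        _ ≤ s := hs.1
      · calc s ≤ max 0 t := hs.2
        _ ≤ |t| := by rcases le_total 0 t with h | h <;> simp [abs_of_nonneg, abs_of_nonpos, h] <;> linarith
    rw [Real.norm_eq_abs, abs_div, abs_neg, abs_pow, abs_of_pos (hpos s hs)]
    apply div_le_div₀ (by positivity) (pow_le_pow_left₀ (abs_nonneg s) hst 3) hε h1
  have key := (convex_Icc (min 0 t) (max 0 t)).norm_image_sub_le_of_norm_hasDerivWithin_le
    (f' := fun s => -(s ^ 3) / (1 + s)) (fun s hs => (hderiv s hs).hasDerivWithinAt) hbound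
    (Set.mem_Icc.mpr ⟨min_le_left 0 t, le_max_left 0 t⟩)
    (Set.mem_Icc.mpr ⟨min_le_right 0 t, le_max_right 0 t⟩)
  have hf0 : f 0 = 0 := by simp [hf]
  rw [hf0, sub_zero, sub_zero, Real.norm_eq_abs, Real.norm_eq_abs] at key
  calc |f t| ≤ |t| ^ 3 / ε₀ * |t| := key
    _ = t ^ 4 / ε₀ := by
      rw [div_mul_eq_mul_div, ← pow_succ, ← abs_pow]
      norm_num [abs_of_nonneg (by positivity : (0:ℝ) ≤ t ^ 4)]

lemma integrable_of_abs_le {Ω : Type*} [MeasurableSpace Ω] (P : Measure Ω)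
    [IsProbabilityMeasure P] (g : Ω → ℝ) (hg : Measurable g) (C : ℝ) (hC : ∀ ω, |g ω| ≤ C) :
    Integrable g P := by
  refine (integrable_const C).mono' hg.aestronglyMeasurable (ae_of_all _ fun ω => ?_)
  simpa [Real.norm_eq_abs] using hC ω

lemma sum_moments {Ω : Type*} [MeasurableSpace Ω] (P : Measure Ω) [IsProbabilityMeasure P]
    (Y : ℕ → Ω → ℝ) (hm : ∀ i, Measurable (Y i)) (hb : ∀ i ω, |Y i ω| ≤ 1)
    (hind : iIndepFun Y P)
    (m2 m3 m4 : ℝ)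
    (h1 : ∀ i, ∫ ω, Y i ω ∂P = 0)
    (h2 : ∀ i, ∫ ω, (Y i ω) ^ 2 ∂P = m2)
    (h3 : ∀ i, ∫ ω, (Y i ω) ^ 3 ∂P = m3)
    (h4 : ∀ i, ∫ ω, (Y i ω) ^ 4 ∂P = m4) (n : ℕ) :
    (∫ ω, (∑ i ∈ Finset.range n, Y i ω) ∂P = 0) ∧
    (∫ ω, (∑ i ∈ Finset.range n, Y i ω) ^ 2 ∂P = n * m2) ∧
    (∫ ω, (∑ i ∈ Finset.range n, Y i ω) ^ 3 ∂P = n * m3) ∧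
    (∫ ω, (∑ i ∈ Finset.range n, Y i ω) ^ 4 ∂P
      = n * m4 + 3 * n * (n - 1) * m2 ^ 2) := by
  induction n with
  | zero => simp
  | succ n ih =>
    obtain ⟨i0, i1, i2, i3⟩ := ih
    set S : Ω → ℝ := fun ω => ∑ i ∈ Finset.range n, Y i ω with hS
    set Z : Ω → ℝ := Y n with hZ
    have hSm : Measurable S := Finset.measurable_sum _ fun i _ => hm i
    have hSb : ∀ ω, |S ω| ≤ (n : ℝ) := by
      intro ω
      calc |S ω| ≤ ∑ i ∈ Finset.range n, |Y i ω| := Finset.abs_sum_le_sum_abs _ _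
        _ ≤ ∑ i ∈ Finset.range n, 1 := Finset.sum_le_sum fun i _ => hb i ω
        _ = n := by simp
    have hSZ : IndepFun S Z P := by
      have h := hind.indepFun_sum_range_succ hm n
      have : (∑ j ∈ Finset.range n, Y j) = S := by
        funext ω; simp [hS, Finset.sum_apply]
      rwa [this] at h
    -- powers
    have hSpm : ∀ a : ℕ, Measurable (fun ω => S ω ^ a) := fun a => hSm.pow_const a
    have hZpm : ∀ b : ℕ, Measurable (fun ω => Z ω ^ b) := fun b => (hm n).pow_const b
    have hSpb : ∀ a : ℕ, ∀ ω, |S ω ^ a| ≤ (n : ℝ) ^ a := fun a ω => by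
      rw [abs_pow]; exact pow_le_pow_left₀ (abs_nonneg _) (hSb ω) a
    have hZpb : ∀ b : ℕ, ∀ ω, |Z ω ^ b| ≤ 1 := fun b ω => by
      rw [abs_pow]; exact pow_le_one₀ (abs_nonneg _) (hb n ω)
    have hSpi : ∀ a : ℕ, Integrable (fun ω => S ω ^ a) P :=
      fun a => integrable_of_abs_le P _ (hSpm a) _ (hSpb a)
    have hZpi : ∀ b : ℕ, Integrable (fun ω => Z ω ^ b) P :=
      fun b => integrable_of_abs_le P _ (hZpm b) _ (hZpb b)
    have hprodi : ∀ a b : ℕ, Integrable (fun ω => S ω ^ a * Z ω ^ b) P := by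
      intro a b
      refine integrable_of_abs_le P _ ((hSpm a).mul (hZpm b)) ((n : ℝ) ^ a) fun ω => ?_
      rw [abs_mul]
      calc |S ω ^ a| * |Z ω ^ b| ≤ (n : ℝ) ^ a * 1 :=
        mul_le_mul (hSpb a ω) (hZpb b ω) (abs_nonneg _) (by positivity)
      _ = (n : ℝ) ^ a := mul_one _
    have key : ∀ a b : ℕ, ∫ ω, S ω ^ a * Z ω ^ b ∂P
        = (∫ ω, S ω ^ a ∂P) * ∫ ω, Z ω ^ b ∂P := by
      intro a b
      have := (hSZ.comp (measurable_id.pow_const a) (measurable_id.pow_const b))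
      exact IndepFun.integral_mul_eq_mul_integral this (hSpi a).1 (hZpi b).1
    have hsum : ∀ ω, ∑ i ∈ Finset.range (n + 1), Y i ω = S ω + Z ω := by
      intro ω; rw [hS, hZ]; exact Finset.sum_range_succ _ n
    have hZ1 : ∫ ω, Z ω ∂P = 0 := h1 n
    have hZ2 : ∫ ω, Z ω ^ 2 ∂P = m2 := h2 n
    have hZ3 : ∫ ω, Z ω ^ 3 ∂P = m3 := h3 n
    have hZ4 : ∫ ω, Z ω ^ 4 ∂P = m4 := h4 n
    refine ⟨?_, ?_, ?_, ?_⟩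
    · simp_rw [hsum]
      rw [integral_add (by simpa using hSpi 1) (by simpa using hZpi 1)]
      simpa using by rw [show (∫ ω, S ω ∂P) = 0 from by simpa using i0, hZ1]; ring
    · have e : ∀ ω, (S ω + Z ω) ^ 2 = S ω ^ 2 + (2 * (S ω ^ 1 * Z ω ^ 1) + Z ω ^ 2) := by
        intro ω; ring
      have hA : Integrable (fun ω => 2 * (S ω ^ 1 * Z ω ^ 1) + Z ω ^ 2) P :=
        ((hprodi 1 1).const_mul 2).add (hZpi 2)
      simp_rw [hsum, e]
      rw [integral_add (hSpi 2) hA,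
        integral_add ((hprodi 1 1).const_mul 2) (hZpi 2), integral_const_mul, key 1 1]
      simp only [pow_one]
      rw [i1, hZ2, show (∫ ω, S ω ∂P) = 0 from by simpa using i0]
      push_cast; ring
    · have e : ∀ ω, (S ω + Z ω) ^ 3 = S ω ^ 3 +
          (3 * (S ω ^ 2 * Z ω ^ 1) + (3 * (S ω ^ 1 * Z ω ^ 2) + Z ω ^ 3)) := by
        intro ω; ring
      have hB : Integrable (fun ω => 3 * (S ω ^ 1 * Z ω ^ 2) + Z ω ^ 3) P :=
        ((hprodi 1 2).const_mul 3).add (hZpi 3)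
      have hA : Integrable (fun ω => 3 * (S ω ^ 2 * Z ω ^ 1) + (3 * (S ω ^ 1 * Z ω ^ 2) + Z ω ^ 3)) P :=
        ((hprodi 2 1).const_mul 3).add hB
      simp_rw [hsum, e]
      rw [integral_add (hSpi 3) hA,
        integral_add ((hprodi 2 1).const_mul 3) hB,
        integral_add ((hprodi 1 2).const_mul 3) (hZpi 3),
        integral_const_mul, integral_const_mul, key 2 1, key 1 2]
      simp only [pow_one]
      rw [i2, hZ1, hZ3, show (∫ ω, S ω ∂P) = 0 from by simpa using i0]
      push_cast; ring
    · have e : ∀ ω, (S ω + Z ω) ^ 4 = S ω ^ 4 +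
          (4 * (S ω ^ 3 * Z ω ^ 1) + (6 * (S ω ^ 2 * Z ω ^ 2) +
            (4 * (S ω ^ 1 * Z ω ^ 3) + Z ω ^ 4))) := by
        intro ω; ring
      have hC : Integrable (fun ω => 4 * (S ω ^ 1 * Z ω ^ 3) + Z ω ^ 4) P :=
        ((hprodi 1 3).const_mul 4).add (hZpi 4)
      have hB : Integrable (fun ω => 6 * (S ω ^ 2 * Z ω ^ 2) + (4 * (S ω ^ 1 * Z ω ^ 3) + Z ω ^ 4)) P :=
        ((hprodi 2 2).const_mul 6).add hC
      have hA : Integrable (fun ω => 4 * (S ω ^ 3 * Z ω ^ 1) + (6 * (S ω ^ 2 * Z ω ^ 2) + (4 * (S ω ^ 1 * Z ω ^ 3) + Z ω ^ 4))) P :=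
        ((hprodi 3 1).const_mul 4).add hB
      simp_rw [hsum, e]
      rw [integral_add (hSpi 4) hA,
        integral_add ((hprodi 3 1).const_mul 4) hB,
        integral_add ((hprodi 2 2).const_mul 6) hC,
        integral_add ((hprodi 1 3).const_mul 4) (hZpi 4),
        integral_const_mul, integral_const_mul, integral_const_mul,
        key 3 1, key 2 2, key 1 3]
      simp only [pow_one]
      rw [i3, i1, hZ1, hZ2, hZ4, show (∫ ω, S ω ∂P) = 0 from by simpa using i0]
      push_cast; ring

lemma step_bound {m2 m4 : ℝ} (hm4 : 0 ≤ m4) {x : ℝ} (hx : 1 ≤ x) :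
    (x * m4 + 3 * x * (x - 1) * m2 ^ 2) / x ^ 4 ≤ (m4 + 3 * m2 ^ 2) / x ^ 2 := by
  have hx0 : 0 < x := lt_of_lt_of_le one_pos hx
  rw [div_le_div_iff₀ (by positivity) (by positivity)]
  have h1 : x * m4 ≤ x ^ 2 * m4 := mul_le_mul_of_nonneg_right (by nlinarith) hm4
  have h2 : 3 * x * (x - 1) * m2 ^ 2 ≤ 3 * x ^ 2 * m2 ^ 2 := by
    nlinarith [mul_nonneg hx0.le (sq_nonneg m2)]
  nlinarith [mul_le_mul_of_nonneg_right (add_le_add h1 h2) (sq_nonneg x)]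

/-- **Proposition 1.** For i.i.d. random variables `p i` with values in `[ε₀, 1]`, `ε₀ > 0`,
with mean `μ` and variance `σ²`, the model-average NLL of the ensemble of size `n`,
`NLL_n = E[-log p̄_n]`, satisfies `NLL_n = -log μ + (σ²/(2μ²))·(1/n) + O(1/n²)`. -/
theorem nll_ensemble_power_law
    {Ω : Type*} [MeasurableSpace Ω] (P : Measure Ω) [IsProbabilityMeasure P]
    (ε₀ : ℝ) (hε₀ : 0 < ε₀)
    (p : ℕ → Ω → ℝ) (hmeas : ∀ i, Measurable (p i))
    (hrange : ∀ i ω, p i ω ∈ Set.Icc ε₀ 1)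
    (hindep : iIndepFun p P)
    (hident : ∀ i, IdentDistrib (p i) (p 0) P P)
    (μ σ2 : ℝ) (hμ : μ = ∫ ω, p 0 ω ∂P) (hσ2 : σ2 = variance (p 0) P) :
    ∃ C > 0, ∀ n : ℕ, 0 < n →
      |(∫ ω, -Real.log ((∑ i ∈ Finset.range n, p i ω) / n) ∂P)
          + Real.log μ - σ2 / (2 * μ ^ 2 * n)| ≤ C / (n : ℝ) ^ 2 := by
  have hop : ∀ i, Integrable (p i) P := fun i =>
    integrable_of_abs_le P _ (hmeas i) 1 fun ω =>
      abs_le.mpr ⟨by linarith [(hrange i ω).1], (hrange i ω).2⟩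
  have hμ1 : μ ≤ 1 := by
    rw [hμ]
    calc ∫ ω, p 0 ω ∂P ≤ ∫ _ω, (1:ℝ) ∂P :=
          integral_mono (hop 0) (integrable_const 1) fun ω => (hrange 0 ω).2
      _ = 1 := by simp
  have hεμ : ε₀ ≤ μ := by
    rw [hμ]
    calc ε₀ = ∫ _ω, (ε₀:ℝ) ∂P := by simp
      _ ≤ ∫ ω, p 0 ω ∂P :=
          integral_mono (integrable_const _) (hop 0) fun ω => (hrange 0 ω).1
  have hμ0 : 0 < μ := lt_of_lt_of_le hε₀ hεμ
  have hε1 : ε₀ ≤ 1 := le_trans hεμ hμ1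
  -- centered variables
  set Y : ℕ → Ω → ℝ := fun i ω => p i ω - μ with hYdef
  have hYm : ∀ i, Measurable (Y i) := fun i => (hmeas i).sub_const μ
  have hYb : ∀ i ω, |Y i ω| ≤ 1 := fun i ω =>
    abs_le.mpr ⟨by simp only [hYdef]; linarith [(hrange i ω).1],
      by simp only [hYdef]; linarith [(hrange i ω).2]⟩
  have hYind : iIndepFun Y P := by
    exact hindep.comp (fun _ => fun t : ℝ => t - μ) fun _ => measurable_id.sub_const μ
  have hpint : ∀ i, ∫ ω, p i ω ∂P = μ := fun i => by rw [hμ]; exact (hident i).integral_eq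
  have hY1 : ∀ i, ∫ ω, Y i ω ∂P = 0 := fun i => by
    simp only [hYdef]
    rw [integral_sub (hop i) (integrable_const μ), hpint i]; simp
  have hident' : ∀ (k : ℕ) (i : ℕ), ∫ ω, (Y i ω) ^ k ∂P = ∫ ω, (Y 0 ω) ^ k ∂P := fun k i =>
    ((hident i).comp ((measurable_id.sub_const μ).pow_const k)).integral_eq
  set m2 : ℝ := ∫ ω, (Y 0 ω) ^ 2 ∂P with hm2
  set m3 : ℝ := ∫ ω, (Y 0 ω) ^ 3 ∂P with hm3
  set m4 : ℝ := ∫ ω, (Y 0 ω) ^ 4 ∂P with hm4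
  have hm4nn : 0 ≤ m4 := integral_nonneg fun ω => by positivity
  have hm2nn : 0 ≤ m2 := integral_nonneg fun ω => by positivity
  -- σ2 = m2
  have hσ2m2 : σ2 = m2 := by
    have hL2 : MemLp (p 0) 2 P :=
      MemLp.of_bound (hmeas 0).aestronglyMeasurable 1 (ae_of_all _ fun ω => by
        rw [Real.norm_eq_abs]
        exact abs_le.mpr ⟨by linarith [(hrange 0 ω).1], (hrange 0 ω).2⟩)
    rw [hσ2, variance_eq_integral hL2.aemeasurable, ← hμ, hm2]
  refine ⟨(m4 + 3 * m2 ^ 2) / ε₀ ^ 5 + |m3| / (3 * μ ^ 3) + 1, ?_, ?_⟩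
  · have t1 : 0 ≤ (m4 + 3 * m2 ^ 2) / ε₀ ^ 5 := by positivity
    have t2 : 0 ≤ |m3| / (3 * μ ^ 3) := by positivity
    linarith
  intro n hn
  have hn' : (0:ℝ) < n := by exact_mod_cast hn
  have hn1 : (1:ℝ) ≤ n := by exact_mod_cast hn
  set S : Ω → ℝ := fun ω => ∑ i ∈ Finset.range n, Y i ω with hSdef
  obtain ⟨j0, j1, j2, j3⟩ := sum_moments P Y hYm hYb hYind m2 m3 m4 hY1
    (fun i => hident' 2 i) (fun i => hident' 3 i) (fun i => hident' 4 i) n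
  set q : Ω → ℝ := fun ω => (∑ i ∈ Finset.range n, p i ω) / n with hq
  have hgoal : (∫ ω, -Real.log ((∑ i ∈ Finset.range n, p i ω) / n) ∂P)
      = ∫ ω, -Real.log (q ω) ∂P := rfl
  rw [hgoal]
  have hqm : Measurable q := (Finset.measurable_sum _ fun i _ => hmeas i).div_const n
  have hqS : ∀ ω, q ω - μ = S ω / n := by
    intro ω
    simp only [hq, hSdef, hYdef]
    rw [Finset.sum_sub_distrib, Finset.sum_const, Finset.card_range]
    field_simp
    rw [nsmul_eq_mul]
  have hqmem : ∀ ω, q ω ∈ Set.Icc ε₀ 1 := by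
    intro ω
    constructor
    · rw [hq]; simp only
      rw [le_div_iff₀ hn']
      calc ε₀ * n = ∑ _i ∈ Finset.range n, ε₀ := by
            rw [Finset.sum_const, Finset.card_range]; ring
        _ ≤ ∑ i ∈ Finset.range n, p i ω := Finset.sum_le_sum fun i _ => (hrange i ω).1
    · rw [hq]; simp only
      rw [div_le_one hn']
      calc ∑ i ∈ Finset.range n, p i ω ≤ ∑ _i ∈ Finset.range n, (1:ℝ) :=
            Finset.sum_le_sum fun i _ => (hrange i ω).2
        _ = n := by simp
  -- integrability of powers of the centered average
  have hub : ∀ ω, |q ω - μ| ≤ 1 := fun ω =>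
    abs_le.mpr ⟨by linarith [(hqmem ω).1], by linarith [(hqmem ω).2]⟩
  have huint : ∀ k : ℕ, Integrable (fun ω => (q ω - μ) ^ k) P := fun k =>
    integrable_of_abs_le P _ ((hqm.sub_const μ).pow_const k) 1 fun ω => by
      rw [abs_pow]; exact pow_le_one₀ (abs_nonneg _) (hub ω)
  have hu1int : Integrable (fun ω => q ω - μ) P := by simpa using huint 1
  have hupow : ∀ k : ℕ, ∫ ω, (q ω - μ) ^ k ∂P = (∫ ω, S ω ^ k ∂P) / (n : ℝ) ^ k := by
    intro k
    simp_rw [hqS, div_pow]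
    exact integral_div _ _
  have hu0 : ∫ ω, (q ω - μ) ∂P = 0 := by
    have h := hupow 1
    simp only [pow_one] at h
    rw [h, j0, zero_div]
  have hu2 : ∫ ω, (q ω - μ) ^ 2 ∂P = m2 / n := by
    rw [hupow 2, j1]; field_simp
  have hu3 : ∫ ω, (q ω - μ) ^ 3 ∂P = m3 / (n : ℝ) ^ 2 := by
    rw [hupow 3, j2]; field_simp
  have hu4 : ∫ ω, (q ω - μ) ^ 4 ∂P
      = ((n : ℝ) * m4 + 3 * n * (n - 1) * m2 ^ 2) / (n : ℝ) ^ 4 := by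
    rw [hupow 4, j3]
  -- integrability of the log term
  have hlogint : Integrable (fun ω => -Real.log (q ω)) P := by
    refine integrable_of_abs_le P _ (Real.measurable_log.comp hqm).neg (-Real.log ε₀) fun ω => ?_
    have h1 : Real.log (q ω) ≤ 0 :=
      Real.log_nonpos (le_trans hε₀.le (hqmem ω).1) (hqmem ω).2
    have h2 : Real.log ε₀ ≤ Real.log (q ω) := Real.log_le_log hε₀ (hqmem ω).1
    rw [abs_neg, abs_of_nonpos h1]
    linarith
  -- the Taylor remainder, pointwise
  have hRb : ∀ ω, |(-Real.log (q ω)) + (Real.log μ + ((1/μ) * (q ω - μ) +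
      ((-(1/(2*μ^2))) * (q ω - μ)^2 + (1/(3*μ^3)) * (q ω - μ)^3)))| ≤ (q ω - μ)^4 / ε₀^5 := by
    intro ω
    set x := q ω with hx
    have hεx : ε₀ ≤ x := (hqmem ω).1
    have hx1 : x ≤ 1 := (hqmem ω).2
    have hx0 : 0 < x := lt_of_lt_of_le hε₀ hεx
    set t : ℝ := (x - μ)/μ with htdef
    have h1t : 1 + t = x / μ := by rw [htdef]; field_simp; ring
    have htt : ε₀ ≤ 1 + t := by
      rw [h1t, le_div_iff₀ hμ0]
      calc ε₀ * μ ≤ ε₀ * 1 := by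
            exact mul_le_mul_of_nonneg_left hμ1 hε₀.le
        _ = ε₀ := mul_one _
        _ ≤ x := hεx
    have key := log_taylor_aux hε₀ hε1 htt
    rw [h1t, Real.log_div hx0.ne' hμ0.ne'] at key
    have e1 : Real.log x - Real.log μ - (t - t^2/2 + t^3/3)
        = -((-Real.log x) + (Real.log μ + ((1/μ) * (x - μ) +
          ((-(1/(2*μ^2))) * (x - μ)^2 + (1/(3*μ^3)) * (x - μ)^3)))) := by
      rw [htdef]; field_simp; ring
    have e2 : t^4/ε₀ = (x-μ)^4/(μ^4*ε₀) := by
      rw [htdef, div_pow, div_div]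
    rw [e1, abs_neg, e2] at key
    refine le_trans key ?_
    apply div_le_div_of_nonneg_left (by positivity) (by positivity)
    calc ε₀ ^ 5 = ε₀ ^ 4 * ε₀ := by ring
      _ ≤ μ ^ 4 * ε₀ := mul_le_mul_of_nonneg_right (pow_le_pow_left₀ hε₀.le hεμ 4) hε₀.le
  -- split the integral
  have h5i : Integrable (fun ω => (1/(3*μ^3)) * (q ω - μ)^3) P := (huint 3).const_mul _
  have h4i : Integrable (fun ω => (-(1/(2*μ^2))) * (q ω - μ)^2
      + (1/(3*μ^3)) * (q ω - μ)^3) P := ((huint 2).const_mul _).add h5i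
  have h3i : Integrable (fun ω => (1/μ) * (q ω - μ) + ((-(1/(2*μ^2))) * (q ω - μ)^2
      + (1/(3*μ^3)) * (q ω - μ)^3)) P := (hu1int.const_mul _).add h4i
  have h2i : Integrable (fun ω => Real.log μ + ((1/μ) * (q ω - μ) +
      ((-(1/(2*μ^2))) * (q ω - μ)^2 + (1/(3*μ^3)) * (q ω - μ)^3))) P :=
    (integrable_const _).add h3i
  have hRint : Integrable (fun ω => (-Real.log (q ω)) + (Real.log μ + ((1/μ) * (q ω - μ) +
      ((-(1/(2*μ^2))) * (q ω - μ)^2 + (1/(3*μ^3)) * (q ω - μ)^3)))) P := hlogint.add h2i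
  have hsplit : ∫ ω, ((-Real.log (q ω)) + (Real.log μ + ((1/μ) * (q ω - μ) +
        ((-(1/(2*μ^2))) * (q ω - μ)^2 + (1/(3*μ^3)) * (q ω - μ)^3)))) ∂P
      = (∫ ω, -Real.log (q ω) ∂P) + (Real.log μ + ((1/μ) * 0 +
        ((-(1/(2*μ^2))) * (m2 / n) + (1/(3*μ^3)) * (m3 / (n : ℝ)^2)))) := by
    rw [integral_add hlogint h2i, integral_add (integrable_const _) h3i,
      integral_add (hu1int.const_mul _) h4i, integral_add ((huint 2).const_mul _) h5i,
      integral_const_mul, integral_const_mul, integral_const_mul, hu0, hu2, hu3, integral_const]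
    simp
  set I : ℝ := ∫ ω, ((-Real.log (q ω)) + (Real.log μ + ((1/μ) * (q ω - μ) +
      ((-(1/(2*μ^2))) * (q ω - μ)^2 + (1/(3*μ^3)) * (q ω - μ)^3)))) ∂P with hIdef
  -- rewrite target
  have hsplit' : I = (∫ ω, -Real.log (q ω) ∂P) + Real.log μ - m2/(2*μ^2*n) + m3/(3*μ^3*(n:ℝ)^2) := by
    rw [hsplit]
    field_simp
    ring
  have hfinal : (∫ ω, -Real.log (q ω) ∂P) + Real.log μ - σ2 / (2 * μ ^ 2 * n)
      = I - m3 / (3 * μ^3 * (n : ℝ)^2) := by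
    rw [hσ2m2, hsplit']
    ring
  rw [hfinal]
  -- bound I
  have hIb : |I| ≤ ((n : ℝ) * m4 + 3 * n * (n - 1) * m2 ^ 2) / (n : ℝ) ^ 4 / ε₀ ^ 5 := by
    have hbd : |I| ≤ ∫ ω, (q ω - μ)^4 / ε₀^5 ∂P := by
      rw [hIdef, ← Real.norm_eq_abs]
      exact norm_integral_le_of_norm_le ((huint 4).div_const (ε₀^5))
        (ae_of_all _ fun ω => by rw [Real.norm_eq_abs]; exact hRb ω)
    calc |I| ≤ ∫ ω, (q ω - μ)^4 / ε₀^5 ∂P := hbd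
      _ = (∫ ω, (q ω - μ)^4 ∂P) / ε₀^5 := integral_div _ _
      _ = ((n : ℝ) * m4 + 3 * n * (n - 1) * m2 ^ 2) / (n : ℝ) ^ 4 / ε₀ ^ 5 := by rw [hu4]
  have hstep : ((n : ℝ) * m4 + 3 * n * (n - 1) * m2 ^ 2) / (n : ℝ) ^ 4
      ≤ (m4 + 3 * m2 ^ 2) / (n : ℝ) ^ 2 := step_bound hm4nn hn1
  calc |I - m3 / (3 * μ^3 * (n : ℝ)^2)| ≤ |I| + |m3 / (3 * μ^3 * (n : ℝ)^2)| := abs_sub _ _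
    _ = |I| + |m3| / (3 * μ^3 * (n : ℝ)^2) := by
        rw [abs_div, abs_of_pos (by positivity : (0:ℝ) < 3 * μ^3 * (n : ℝ)^2)]
    _ ≤ (m4 + 3 * m2 ^ 2) / (n : ℝ) ^ 2 / ε₀ ^ 5 + |m3| / (3 * μ^3 * (n : ℝ)^2) := by
        refine add_le_add (hIb.trans ?_) le_rfl
        exact (div_le_div_iff_of_pos_right (by positivity)).mpr hstep
    _ = ((m4 + 3 * m2 ^ 2) / ε₀ ^ 5 + |m3| / (3 * μ ^ 3)) / (n : ℝ) ^ 2 := by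
        field_simp
    _ ≤ ((m4 + 3 * m2 ^ 2) / ε₀ ^ 5 + |m3| / (3 * μ ^ 3) + 1) / (n : ℝ) ^ 2 := by
        refine (div_le_div_iff_of_pos_right (by positivity)).mpr ?_
        linarith
end

section
/- Let p_1, p_2, ... be independent identically distributed random variables with values in the interval [ε₀, 1] for some ε₀ > 0, with mean μ = E[p_1], and let p̄_n = (1/n)·∑_{i=1}^n p_i. Fix an integer m ≥ 1, a real number 0 < δ < 1, and define R_m(μ − x) = −log(x/μ) − ∑_{k=1}^m (μ − x)^k/(k·μ^k) for x ∈ [ε₀, 1]. Then there exist constants C₁, C₂ > 0 and a positive integer N such that for all n ≥ N, |E[R_m(μ − p̄_n)]| ≤ C₁·exp(−2·n^δ) + C₂·n^{−(m+1)(1−δ)/2}. -/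
open MeasureTheory ProbabilityTheory

/-- The Taylor remainder of the logarithm:
`R_m(μ - x) = -log(x/μ) - ∑_{k=1}^m (μ - x)^k/(k μ^k)`. -/
noncomputable def taylorRem (m : ℕ) (μ x : ℝ) : ℝ :=
  -Real.log (x / μ) - ∑ k ∈ Finset.Icc 1 m, (μ - x) ^ k / ((k : ℝ) * μ ^ k)

private lemma taylorRem_eq (m : ℕ) {μ : ℝ} (x : ℝ) (hμ : 0 < μ) :
    taylorRem m μ x =
      -((∑ i ∈ Finset.range m, ((μ - x) / μ) ^ (i + 1) / (i + 1))
        + Real.log (1 - (μ - x) / μ)) := by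
  have hμ0 : μ ≠ 0 := ne_of_gt hμ
  have h1 : (1 : ℝ) - (μ - x) / μ = x / μ := by field_simp; ring
  have h2 : ∑ k ∈ Finset.Icc 1 m, (μ - x) ^ k / ((k : ℝ) * μ ^ k)
      = ∑ i ∈ Finset.range m, ((μ - x) / μ) ^ (i + 1) / (i + 1) := by
    rw [← Finset.Ico_add_one_right_eq_Icc, Finset.sum_Ico_eq_sum_range]
    refine Finset.sum_congr rfl fun i _ => ?_
    rw [div_pow, div_div]
    push_cast
    ring_nf
  rw [taylorRem, h1, h2]
  ring

private lemma taylorRem_abs_le (m : ℕ) {μ x : ℝ} (hμ : 0 < μ)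
    (ht : |(μ - x) / μ| < 1) :
    |taylorRem m μ x| ≤ |(μ - x) / μ| ^ (m + 1) / (1 - |(μ - x) / μ|) := by
  have h := Real.abs_log_sub_add_sum_range_le ht m
  rw [taylorRem_eq m x hμ, abs_neg]
  exact h

private lemma taylorRem_global_bound (m : ℕ) {ε₀ μ x : ℝ} (hε₀ : 0 < ε₀)
    (hμ : μ ∈ Set.Icc ε₀ 1) (hx : x ∈ Set.Icc ε₀ 1) :
    |taylorRem m μ x| ≤ 2 * |Real.log ε₀| + m / ε₀ ^ m := by
  obtain ⟨hμ1, hμ2⟩ := hμ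
  obtain ⟨hx1, hx2⟩ := hx
  have hε₁ : ε₀ ≤ 1 := le_trans hμ1 hμ2
  have hμpos : 0 < μ := lt_of_lt_of_le hε₀ hμ1
  have hxpos : 0 < x := lt_of_lt_of_le hε₀ hx1
  have hlog : ∀ y : ℝ, ε₀ ≤ y → y ≤ 1 → |Real.log y| ≤ |Real.log ε₀| := by
    intro y h1 h2
    have l1 : Real.log y ≤ 0 := Real.log_nonpos (by linarith) h2
    have l2 : Real.log ε₀ ≤ Real.log y := Real.log_le_log hε₀ h1
    rw [abs_of_nonpos l1, abs_of_nonpos (l2.trans l1)]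
    linarith
  have h1 : |Real.log (x / μ)| ≤ 2 * |Real.log ε₀| := by
    rw [Real.log_div (ne_of_gt hxpos) (ne_of_gt hμpos)]
    calc |Real.log x - Real.log μ| ≤ |Real.log x| + |Real.log μ| := abs_sub _ _
      _ ≤ |Real.log ε₀| + |Real.log ε₀| := add_le_add (hlog x hx1 hx2) (hlog μ hμ1 hμ2)
      _ = 2 * |Real.log ε₀| := by ring
  have h2 : |∑ k ∈ Finset.Icc 1 m, (μ - x) ^ k / ((k : ℝ) * μ ^ k)| ≤ m / ε₀ ^ m := by
    calc |∑ k ∈ Finset.Icc 1 m, (μ - x) ^ k / ((k : ℝ) * μ ^ k)|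
        ≤ ∑ k ∈ Finset.Icc 1 m, |(μ - x) ^ k / ((k : ℝ) * μ ^ k)| :=
          Finset.abs_sum_le_sum_abs _ _
      _ ≤ ∑ k ∈ Finset.Icc 1 m, 1 / ε₀ ^ m := by
          refine Finset.sum_le_sum fun k hk => ?_
          obtain ⟨hk1, hk2⟩ := Finset.mem_Icc.mp hk
          have hk1' : (1 : ℝ) ≤ (k : ℝ) := by exact_mod_cast hk1
          have hd : (0 : ℝ) < (k : ℝ) * μ ^ k := by positivity
          rw [abs_div, abs_of_pos hd, abs_pow]
          have hnum : |μ - x| ^ k ≤ 1 := by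
            refine pow_le_one₀ (abs_nonneg _) ?_
            rw [abs_le]; constructor <;> linarith
          have hden : ε₀ ^ m ≤ (k : ℝ) * μ ^ k := by
            have h1 : ε₀ ^ m ≤ ε₀ ^ k := pow_le_pow_of_le_one hε₀.le hε₁ hk2
            have h2 : ε₀ ^ k ≤ μ ^ k := pow_le_pow_left₀ hε₀.le hμ1 k
            nlinarith [pow_pos hε₀ m, pow_pos hε₀ k, pow_pos hμpos k]
          exact div_le_div₀ zero_le_one hnum (pow_pos hε₀ m) hden
      _ = m / ε₀ ^ m := by
          rw [Finset.sum_const, Nat.card_Icc]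
          simp [div_eq_mul_inv]
  calc |taylorRem m μ x|
      ≤ |-Real.log (x / μ)| + |∑ k ∈ Finset.Icc 1 m, (μ - x) ^ k / ((k : ℝ) * μ ^ k)| :=
        abs_sub _ _
    _ ≤ 2 * |Real.log ε₀| + m / ε₀ ^ m := by rw [abs_neg]; exact add_le_add h1 h2

private lemma int_of_bdd {Ω : Type*} [MeasurableSpace Ω] (P : Measure Ω)
    [IsProbabilityMeasure P] {f : Ω → ℝ} (hf : Measurable f) {C : ℝ}
    (h : ∀ ω, |f ω| ≤ C) : Integrable f P :=
  ⟨hf.aestronglyMeasurable,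
    MeasureTheory.HasFiniteIntegral.of_bounded (C := C)
      (Filter.Eventually.of_forall (by simpa [Real.norm_eq_abs] using h))⟩

private lemma mgf_le_aux {Ω : Type*} [MeasurableSpace Ω] (P : Measure Ω)
    [IsProbabilityMeasure P] (Y : Ω → ℝ) (hYm : Measurable Y)
    (hYb : ∀ ω, |Y ω| ≤ 1) (hY0 : ∫ ω, Y ω ∂P = 0)
    {t : ℝ} (ht0 : 0 ≤ t) (ht1 : t ≤ 1) :
    mgf Y P t ≤ Real.exp (3 / 4 * t ^ 2) := by
  have hYint : Integrable Y P := int_of_bdd P hYm hYb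
  have hpt : ∀ ω, Real.exp (t * Y ω) ≤ 1 + t * Y ω + 3 / 4 * t ^ 2 := by
    intro ω
    have hx : |t * Y ω| ≤ 1 := by
      rw [abs_mul, abs_of_nonneg ht0]
      calc t * |Y ω| ≤ 1 * 1 := mul_le_mul ht1 (hYb ω) (abs_nonneg _) zero_le_one
        _ = 1 := one_mul 1
    have h := Real.exp_bound hx (n := 2) (by norm_num)
    have hsum : ∑ i ∈ Finset.range 2, (t * Y ω) ^ i / (Nat.factorial i) = 1 + t * Y ω := by
      simp [Finset.sum_range_succ, Nat.factorial]
    rw [hsum] at h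
    have h2 : |t * Y ω| ^ 2 * ((2 : ℕ).succ / ((Nat.factorial 2) * (2 : ℕ))) =
        (t * Y ω) ^ 2 * (3 / 4) := by
      rw [sq_abs]; norm_num [Nat.factorial]
    rw [h2] at h
    have hY2 : (Y ω) ^ 2 ≤ 1 := by
      have := abs_le.mp (hYb ω); nlinarith [this.1, this.2]
    have habs := abs_le.mp h
    nlinarith [sq_nonneg t, habs.1, habs.2, sq_nonneg (Y ω), mul_pow t (Y ω) 2]
  have hint1 : Integrable (fun ω => Real.exp (t * Y ω)) P := by
    refine int_of_bdd P ((hYm.const_mul t).exp) (C := Real.exp 1) fun ω => ?_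
    rw [abs_of_pos (Real.exp_pos _)]
    refine Real.exp_le_exp.mpr ?_
    have hx : |t * Y ω| ≤ 1 := by
      rw [abs_mul, abs_of_nonneg ht0]
      calc t * |Y ω| ≤ 1 * 1 := mul_le_mul ht1 (hYb ω) (abs_nonneg _) zero_le_one
        _ = 1 := one_mul 1
    exact (le_abs_self _).trans hx
  have hint2 : Integrable (fun ω => 1 + t * Y ω + 3 / 4 * t ^ 2) P :=
    ((integrable_const 1).add (hYint.const_mul t)).add (integrable_const _)
  calc mgf Y P t ≤ ∫ ω, (1 + t * Y ω + 3 / 4 * t ^ 2) ∂P :=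
        integral_mono hint1 hint2 hpt
    _ = 1 + 3 / 4 * t ^ 2 := by
        have h3 : ∫ ω, (1 + t * Y ω + 3 / 4 * t ^ 2) ∂P
            = ∫ ω, ((1 + 3 / 4 * t ^ 2) + t * Y ω) ∂P := by
          congr 1; ext ω; ring
        rw [h3, integral_add (integrable_const _) (hYint.const_mul t), integral_const_mul,
          hY0, integral_const]
        simp
    _ ≤ Real.exp (3 / 4 * t ^ 2) := by
        have := Real.add_one_le_exp (3 / 4 * t ^ 2); linarith

private lemma chernoff_aux {Ω : Type*} [MeasurableSpace Ω] (P : Measure Ω)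
    [IsProbabilityMeasure P] (Y : ℕ → Ω → ℝ) (hYm : ∀ i, Measurable (Y i))
    (hYb : ∀ i ω, |Y i ω| ≤ 1) (hY0 : ∀ i, ∫ ω, Y i ω ∂P = 0)
    (hYind : iIndepFun Y P)
    {δ : ℝ} (hδ0 : 0 < δ) (hδ1 : δ < 1) (n : ℕ) (hn : 1 ≤ n) :
    (P {ω | 3 * (n : ℝ) ^ ((1 + δ) / 2) ≤ ∑ i ∈ Finset.range n, Y i ω}).toReal
      ≤ Real.exp (-2 * (n : ℝ) ^ δ) := by
  have hν1 : (1 : ℝ) ≤ (n : ℝ) := by exact_mod_cast hn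
  have hν : (0 : ℝ) < (n : ℝ) := lt_of_lt_of_le one_pos hν1
  set t : ℝ := (n : ℝ) ^ (-((1 - δ) / 2)) with htdef
  have ht0 : 0 < t := Real.rpow_pos_of_pos hν _
  have ht1 : t ≤ 1 := Real.rpow_le_one_of_one_le_of_nonpos hν1 (by linarith)
  set a : ℝ := 3 * (n : ℝ) ^ ((1 + δ) / 2) with hadef
  -- abs bound on the sum
  have hSb : ∀ ω, |∑ i ∈ Finset.range n, Y i ω| ≤ (n : ℝ) := fun ω => by
    calc |∑ i ∈ Finset.range n, Y i ω| ≤ ∑ i ∈ Finset.range n, |Y i ω| :=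
          Finset.abs_sum_le_sum_abs _ _
      _ ≤ ∑ _i ∈ Finset.range n, (1 : ℝ) := Finset.sum_le_sum fun i _ => hYb i ω
      _ = (n : ℝ) := by simp
  have hSm : Measurable (fun ω => ∑ i ∈ Finset.range n, Y i ω) :=
    Finset.measurable_sum _ fun i _ => hYm i
  have h_int : Integrable (fun ω => Real.exp (t * ∑ i ∈ Finset.range n, Y i ω)) P := by
    refine int_of_bdd P ((hSm.const_mul t).exp) (C := Real.exp (n : ℝ)) fun ω => ?_
    rw [abs_of_pos (Real.exp_pos _)]
    refine Real.exp_le_exp.mpr ?_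
    calc t * ∑ i ∈ Finset.range n, Y i ω ≤ |t * ∑ i ∈ Finset.range n, Y i ω| := le_abs_self _
      _ = t * |∑ i ∈ Finset.range n, Y i ω| := by rw [abs_mul, abs_of_pos ht0]
      _ ≤ 1 * (n : ℝ) := mul_le_mul ht1 (hSb ω) (abs_nonneg _) zero_le_one
      _ = (n : ℝ) := one_mul _
  have hmgf : mgf (∑ i ∈ Finset.range n, Y i) P t ≤ Real.exp (3 / 4 * t ^ 2 * n) := by
    rw [hYind.mgf_sum hYm]
    calc ∏ i ∈ Finset.range n, mgf (Y i) P t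
        ≤ ∏ _i ∈ Finset.range n, Real.exp (3 / 4 * t ^ 2) :=
          Finset.prod_le_prod (fun i _ => mgf_nonneg)
            (fun i _ => mgf_le_aux P (Y i) (hYm i) (hYb i) (hY0 i) ht0.le ht1)
      _ = Real.exp (3 / 4 * t ^ 2) ^ n := by rw [Finset.prod_const, Finset.card_range]
      _ = Real.exp (3 / 4 * t ^ 2 * n) := by
          rw [← Real.exp_nat_mul]; ring_nf
  have hchern := measure_ge_le_exp_mul_mgf (X := ∑ i ∈ Finset.range n, Y i) (μ := P) a ht0.le
    (by simpa [Finset.sum_apply] using h_int)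
  have hta : t * a = 3 * (n : ℝ) ^ δ := by
    have he : -((1 - δ) / 2) + (1 + δ) / 2 = δ := by ring
    rw [htdef, hadef, ← he, Real.rpow_add hν]
    ring
  have ht2 : t ^ 2 * (n : ℝ) = (n : ℝ) ^ δ := by
    have h' : t ^ 2 = (n : ℝ) ^ (-(1 - δ)) := by
      rw [htdef, sq, ← Real.rpow_add hν]
      congr 1; ring
    rw [h', show ((n : ℝ) ^ (-(1 - δ)) * n : ℝ) = (n : ℝ) ^ (-(1 - δ) + 1) by
      rw [Real.rpow_add hν, Real.rpow_one]]
    congr 1; ring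
  have hset : {ω | a ≤ (∑ i ∈ Finset.range n, Y i) ω}
      = {ω | 3 * (n : ℝ) ^ ((1 + δ) / 2) ≤ ∑ i ∈ Finset.range n, Y i ω} := by
    simp [hadef, Finset.sum_apply]
  rw [hset] at hchern
  refine hchern.trans ?_
  calc Real.exp (-t * a) * mgf (∑ i ∈ Finset.range n, Y i) P t
      ≤ Real.exp (-t * a) * Real.exp (3 / 4 * t ^ 2 * n) := by
        refine mul_le_mul_of_nonneg_left hmgf (Real.exp_pos _).le
    _ = Real.exp (-t * a + 3 / 4 * t ^ 2 * n) := (Real.exp_add _ _).symm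
    _ ≤ Real.exp (-2 * (n : ℝ) ^ δ) := by
        refine Real.exp_le_exp.mpr ?_
        have hp : (0 : ℝ) ≤ (n : ℝ) ^ δ := (Real.rpow_pos_of_pos hν δ).le
        nlinarith [hta, ht2]

private lemma taylorRem_measurable (m : ℕ) (μ : ℝ) : Measurable (taylorRem m μ) := by
  unfold taylorRem
  refine Measurable.sub ?_ ?_
  · exact (Real.measurable_log.comp (measurable_id.div_const μ)).neg
  · exact Finset.measurable_sum _ fun k _ =>
      ((measurable_const.sub measurable_id).pow_const k).div_const _

/-- For i.i.d. `p i` with values in `[ε₀, 1]`, `ε₀ > 0`, mean `μ`, any `m ≥ 1` and `0 < δ < 1`,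
there are constants `C₁, C₂ > 0` and `N` such that for all `n ≥ N`,
`|E[R_m(μ - p̄_n)]| ≤ C₁ exp(-2 n^δ) + C₂ n^{-(m+1)(1-δ)/2}`. -/
theorem remainder_expectation_bound
    {Ω : Type*} [MeasurableSpace Ω] (P : Measure Ω) [IsProbabilityMeasure P]
    (ε₀ : ℝ) (hε₀ : 0 < ε₀)
    (p : ℕ → Ω → ℝ) (hmeas : ∀ i, Measurable (p i))
    (hrange : ∀ i ω, p i ω ∈ Set.Icc ε₀ 1)
    (hindep : iIndepFun p P)
    (hident : ∀ i, IdentDistrib (p i) (p 0) P P)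
    (μ : ℝ) (hμ : μ = ∫ ω, p 0 ω ∂P)
    (m : ℕ) (hm : 1 ≤ m) (δ : ℝ) (hδ0 : 0 < δ) (hδ1 : δ < 1) :
    ∃ C₁ > (0 : ℝ), ∃ C₂ > (0 : ℝ), ∃ N : ℕ, 0 < N ∧ ∀ n : ℕ, N ≤ n →
      |∫ ω, taylorRem m μ ((∑ i ∈ Finset.range n, p i ω) / n) ∂P|
        ≤ C₁ * Real.exp (-2 * (n : ℝ) ^ δ)
          + C₂ * (n : ℝ) ^ (-((m + 1 : ℝ) * (1 - δ) / 2)) := by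
  have hp_int : ∀ i, Integrable (p i) P := fun i =>
    int_of_bdd P (hmeas i) (C := 1) fun ω =>
      abs_le.mpr ⟨by linarith [(hrange i ω).1], (hrange i ω).2⟩
  have hμmem : μ ∈ Set.Icc ε₀ 1 := by
    constructor
    · rw [hμ]
      calc ε₀ = ∫ _, ε₀ ∂P := by simp
        _ ≤ ∫ ω, p 0 ω ∂P :=
          integral_mono (integrable_const _) (hp_int 0) fun ω => (hrange 0 ω).1
    · rw [hμ]
      calc ∫ ω, p 0 ω ∂P ≤ ∫ _, (1 : ℝ) ∂P :=
          integral_mono (hp_int 0) (integrable_const _) fun ω => (hrange 0 ω).2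
        _ = 1 := by simp
  have hμpos : 0 < μ := lt_of_lt_of_le hε₀ hμmem.1
  have hε₁ : ε₀ ≤ 1 := hμmem.1.trans hμmem.2
  -- centered variables
  set Y : ℕ → Ω → ℝ := fun i ω => p i ω - μ with hYdef
  have hYm : ∀ i, Measurable (Y i) := fun i => (hmeas i).sub measurable_const
  have hYb : ∀ i ω, |Y i ω| ≤ 1 := fun i ω => by
    have h1 := (hrange i ω).1
    have h2 := (hrange i ω).2
    rw [abs_le]
    constructor <;> simp only [hYdef] <;> [linarith [hμmem.2]; linarith [hμmem.1]]
  have hY0 : ∀ i, ∫ ω, Y i ω ∂P = 0 := by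
    intro i
    have hpi : ∫ ω, p i ω ∂P = μ := by rw [hμ]; exact (hident i).integral_eq
    simp only [hYdef]
    rw [integral_sub (hp_int i) (integrable_const μ), hpi, integral_const]
    simp
  have hYind : iIndepFun Y P :=
    hindep.comp (fun _ x => x - μ) fun _ => measurable_id.sub measurable_const
  have hYind' : iIndepFun (fun i ω => -(Y i ω)) P :=
    hYind.comp (fun _ x => -x) fun _ => measurable_neg
  -- choice of N
  have hto : Filter.Tendsto (fun n : ℕ => 3 * (n : ℝ) ^ (-((1 - δ) / 2)))
      Filter.atTop (nhds 0) := by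
    have h := (tendsto_rpow_neg_atTop (y := (1 - δ) / 2) (by linarith)).comp
      tendsto_natCast_atTop_atTop
    simpa using h.const_mul 3
  have hev := hto.eventually_lt_const (show (0 : ℝ) < μ / 2 by linarith)
  obtain ⟨N₀, hN₀⟩ := Filter.eventually_atTop.mp hev
  set M : ℝ := 2 * |Real.log ε₀| + m / ε₀ ^ m with hMdef
  have hM0 : 0 ≤ M := by positivity
  refine ⟨2 * M + 1, by positivity, 2 * (3 / μ) ^ (m + 1), by positivity,
    max N₀ 1, lt_of_lt_of_le one_pos (le_max_right _ _), ?_⟩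
  intro n hn
  have hn1 : 1 ≤ n := le_trans (le_max_right _ _) hn
  have hnN₀ : N₀ ≤ n := le_trans (le_max_left _ _) hn
  have hν1 : (1 : ℝ) ≤ (n : ℝ) := by exact_mod_cast hn1
  have hν : (0 : ℝ) < (n : ℝ) := lt_of_lt_of_le one_pos hν1
  set S : Ω → ℝ := fun ω => ∑ i ∈ Finset.range n, Y i ω with hSdef
  set xbar : Ω → ℝ := fun ω => (∑ i ∈ Finset.range n, p i ω) / n with hxdef
  have hxS : ∀ ω, xbar ω - μ = S ω / n := by
    intro ω
    have : S ω = (∑ i ∈ Finset.range n, p i ω) - n * μ := by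
      simp only [hSdef, hYdef, Finset.sum_sub_distrib, Finset.sum_const, Finset.card_range,
        nsmul_eq_mul]
    rw [this, hxdef]
    field_simp
  have hxmem : ∀ ω, xbar ω ∈ Set.Icc ε₀ 1 := by
    intro ω
    have hlo : (n : ℝ) * ε₀ ≤ ∑ i ∈ Finset.range n, p i ω := by
      calc (n : ℝ) * ε₀ = ∑ _i ∈ Finset.range n, ε₀ := by
            rw [Finset.sum_const, Finset.card_range, nsmul_eq_mul]
        _ ≤ ∑ i ∈ Finset.range n, p i ω := Finset.sum_le_sum fun i _ => (hrange i ω).1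
    have hhi : ∑ i ∈ Finset.range n, p i ω ≤ (n : ℝ) * 1 := by
      calc ∑ i ∈ Finset.range n, p i ω ≤ ∑ _i ∈ Finset.range n, (1 : ℝ) :=
            Finset.sum_le_sum fun i _ => (hrange i ω).2
        _ = (n : ℝ) * 1 := by rw [Finset.sum_const, Finset.card_range, nsmul_eq_mul]
    constructor
    · rw [hxdef, le_div_iff₀ hν]; linarith
    · rw [hxdef, div_le_one hν]; linarith
  set a : ℝ := 3 * (n : ℝ) ^ ((1 + δ) / 2) with hadef
  set eps' : ℝ := 3 * (n : ℝ) ^ (-((1 - δ) / 2)) with hepsdef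
  have heps'pos : 0 < eps' := by positivity
  have heps'μ : eps' ≤ μ / 2 := (hN₀ n hnN₀).le
  have haν : a / n = eps' := by
    rw [hadef, hepsdef, mul_div_assoc]
    congr 1
    rw [show ((1 + δ) / 2 : ℝ) = -((1 - δ) / 2) + 1 by ring, Real.rpow_add hν, Real.rpow_one,
      mul_div_assoc, div_self (ne_of_gt hν), mul_one]
  set B₁ : Set Ω := {ω | a ≤ S ω} with hB₁def
  set B₂ : Set Ω := {ω | a ≤ -S ω} with hB₂def
  have hSm : Measurable S := Finset.measurable_sum _ fun i _ => hYm i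
  have hB₁ : MeasurableSet B₁ := measurableSet_le measurable_const hSm
  have hB₂ : MeasurableSet B₂ := measurableSet_le measurable_const hSm.neg
  have hB : MeasurableSet (B₁ ∪ B₂) := hB₁.union hB₂
  have htail1 : (P B₁).toReal ≤ Real.exp (-2 * (n : ℝ) ^ δ) :=
    chernoff_aux P Y hYm hYb hY0 hYind hδ0 hδ1 n hn1
  have htail2 : (P B₂).toReal ≤ Real.exp (-2 * (n : ℝ) ^ δ) := by
    have h := chernoff_aux P (fun i ω => -(Y i ω)) (fun i => (hYm i).neg)
      (fun i ω => by rw [abs_neg]; exact hYb i ω)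
      (fun i => by rw [integral_neg, hY0 i, neg_zero]) hYind' hδ0 hδ1 n hn1
    have hset : {ω | 3 * (n : ℝ) ^ ((1 + δ) / 2) ≤ ∑ i ∈ Finset.range n, -(Y i ω)} = B₂ := by
      simp [hB₂def, hSdef, hadef, Finset.sum_neg_distrib]
    rwa [hset] at h
  have hPB : (P (B₁ ∪ B₂)).toReal ≤ 2 * Real.exp (-2 * (n : ℝ) ^ δ) := by
    have h1 : P (B₁ ∪ B₂) ≤ P B₁ + P B₂ := measure_union_le _ _
    have h2 : (P (B₁ ∪ B₂)).toReal ≤ (P B₁ + P B₂).toReal := by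
      refine ENNReal.toReal_mono ?_ h1
      exact ENNReal.add_ne_top.mpr ⟨measure_ne_top _ _, measure_ne_top _ _⟩
    rw [ENNReal.toReal_add (measure_ne_top _ _) (measure_ne_top _ _)] at h2
    linarith
  -- the integrand
  set g : Ω → ℝ := fun ω => taylorRem m μ (xbar ω) with hgdef
  have hgm : Measurable g := (taylorRem_measurable m μ).comp
    ((Finset.measurable_sum _ fun i _ => hmeas i).div_const _)
  have hgM : ∀ ω, |g ω| ≤ M := fun ω =>
    taylorRem_global_bound m hε₀ hμmem (hxmem ω)
  have hg_int : Integrable g P := int_of_bdd P hgm hgM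
  -- good-set bound
  have hgood : ∀ ω ∈ (B₁ ∪ B₂)ᶜ,
      |g ω| ≤ 2 * (3 / μ) ^ (m + 1) * (n : ℝ) ^ (-((m + 1 : ℝ) * (1 - δ) / 2)) := by
    intro ω hω
    simp only [Set.mem_compl_iff, Set.mem_union, hB₁def, hB₂def, Set.mem_setOf_eq, not_or,
      not_le] at hω
    have hSabs : |S ω| ≤ a := by
      rw [abs_le]; constructor <;> linarith [hω.1, hω.2]
    have hxd : |xbar ω - μ| ≤ eps' := by
      rw [hxS ω, abs_div, abs_of_pos hν, div_le_iff₀ hν, ← haν, div_mul_cancel₀ _ (ne_of_gt hν)]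
      exact hSabs
    set τ : ℝ := (μ - xbar ω) / μ with hτdef
    have hτ : |τ| ≤ eps' / μ := by
      rw [hτdef, abs_div, abs_of_pos hμpos, abs_sub_comm]
      exact (div_le_div_iff_of_pos_right hμpos).mpr hxd
    have hτ2 : |τ| ≤ 1 / 2 := by
      refine hτ.trans ?_
      rw [div_le_div_iff₀ hμpos two_pos]
      linarith
    have hτlt : |τ| < 1 := lt_of_le_of_lt hτ2 (by norm_num)
    have hbound := taylorRem_abs_le m hμpos hτlt
    have hden : (1 : ℝ) / 2 ≤ 1 - |τ| := by linarith
    have hnum : |τ| ^ (m + 1) ≤ (eps' / μ) ^ (m + 1) :=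
      pow_le_pow_left₀ (abs_nonneg _) hτ _
    calc |g ω| ≤ |τ| ^ (m + 1) / (1 - |τ|) := hbound
      _ ≤ (eps' / μ) ^ (m + 1) / (1 / 2) :=
          div_le_div₀ (by positivity) hnum (by norm_num) hden
      _ = 2 * (eps' / μ) ^ (m + 1) := by ring
      _ = 2 * (3 / μ) ^ (m + 1) * (n : ℝ) ^ (-((m + 1 : ℝ) * (1 - δ) / 2)) := by
          rw [hepsdef]
          rw [show (3 * (n : ℝ) ^ (-((1 - δ) / 2)) / μ) = (3 / μ) * (n : ℝ) ^ (-((1 - δ) / 2))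
            by ring]
          rw [mul_pow]
          rw [← Real.rpow_natCast ((n : ℝ) ^ (-((1 - δ) / 2))) (m + 1), ← Real.rpow_mul hν.le]
          rw [show (-((1 - δ) / 2) * ((m + 1 : ℕ) : ℝ)) = -((m + 1 : ℝ) * (1 - δ) / 2) by
            push_cast; ring]
          ring
  -- combine
  have hsplit : ∫ ω, g ω ∂P = (∫ ω in B₁ ∪ B₂, g ω ∂P) + ∫ ω in (B₁ ∪ B₂)ᶜ, g ω ∂P :=
    (integral_add_compl hB hg_int).symm
  have hgoal : |∫ ω, g ω ∂P|
      ≤ (2 * M + 1) * Real.exp (-2 * (n : ℝ) ^ δ)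
        + 2 * (3 / μ) ^ (m + 1) * (n : ℝ) ^ (-((m + 1 : ℝ) * (1 - δ) / 2)) := by
    rw [hsplit]
    have h1 : |∫ ω in B₁ ∪ B₂, g ω ∂P| ≤ M * (P (B₁ ∪ B₂)).toReal := by
      have := norm_setIntegral_le_of_norm_le_const (μ := P) (s := B₁ ∪ B₂)
        (measure_lt_top _ _) (f := g) (C := M) fun ω _ => by
          rw [Real.norm_eq_abs]; exact hgM ω
      rwa [Real.norm_eq_abs] at this
    have h2 : |∫ ω in (B₁ ∪ B₂)ᶜ, g ω ∂P|
        ≤ (2 * (3 / μ) ^ (m + 1) * (n : ℝ) ^ (-((m + 1 : ℝ) * (1 - δ) / 2)))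
          * (P (B₁ ∪ B₂)ᶜ).toReal := by
      have := norm_setIntegral_le_of_norm_le_const (μ := P) (s := (B₁ ∪ B₂)ᶜ)
        (measure_lt_top _ _) (f := g)
        (C := 2 * (3 / μ) ^ (m + 1) * (n : ℝ) ^ (-((m + 1 : ℝ) * (1 - δ) / 2)))
        fun ω hω => by rw [Real.norm_eq_abs]; exact hgood ω hω
      rwa [Real.norm_eq_abs] at this
    have hPc : (P (B₁ ∪ B₂)ᶜ).toReal ≤ 1 := by
      simpa using ENNReal.toReal_mono ENNReal.one_ne_top (prob_le_one (μ := P) (s := (B₁ ∪ B₂)ᶜ))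
    have hC2pos : (0 : ℝ) ≤ 2 * (3 / μ) ^ (m + 1) * (n : ℝ) ^ (-((m + 1 : ℝ) * (1 - δ) / 2)) :=
      by positivity
    calc |(∫ ω in B₁ ∪ B₂, g ω ∂P) + ∫ ω in (B₁ ∪ B₂)ᶜ, g ω ∂P|
        ≤ |∫ ω in B₁ ∪ B₂, g ω ∂P| + |∫ ω in (B₁ ∪ B₂)ᶜ, g ω ∂P| := abs_add_le _ _
      _ ≤ M * (P (B₁ ∪ B₂)).toReal
          + (2 * (3 / μ) ^ (m + 1) * (n : ℝ) ^ (-((m + 1 : ℝ) * (1 - δ) / 2)))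
            * (P (B₁ ∪ B₂)ᶜ).toReal := add_le_add h1 h2
      _ ≤ M * (2 * Real.exp (-2 * (n : ℝ) ^ δ))
          + (2 * (3 / μ) ^ (m + 1) * (n : ℝ) ^ (-((m + 1 : ℝ) * (1 - δ) / 2))) * 1 := by
          refine add_le_add (mul_le_mul_of_nonneg_left hPB hM0)
            (mul_le_mul_of_nonneg_left hPc hC2pos)
      _ ≤ (2 * M + 1) * Real.exp (-2 * (n : ℝ) ^ δ)
          + 2 * (3 / μ) ^ (m + 1) * (n : ℝ) ^ (-((m + 1 : ℝ) * (1 - δ) / 2)) := by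
          have hexp : (0 : ℝ) < Real.exp (-2 * (n : ℝ) ^ δ) := Real.exp_pos _
          nlinarith
  exact hgoal
end

section
/- Let T be a nonempty compact topological space and let c : T → ℝ and b : T → ℝ be continuous. For each positive integer n define PL_n(τ) = c(τ) + b(τ)/n and the lower envelope LE_n = min_{τ ∈ T} PL_n(τ). Then there exist real numbers c* and b* such that LE_n = c* + b*/n + o(1/n) as n → ∞; that is, n·(LE_n − c* − b*/n) → 0 as n → ∞. Moreover, one may take c* = c(τ*) and b* = b(τ*) for some τ* ∈ T. -/
open Filter Topology

/-- **Proposition 2.** Let `T` be a nonempty compact (and, for the "moreover" clause,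
sequentially compact) space and `c, b : T → ℝ` continuous. If `LE n` is the minimum over
`τ ∈ T` of the power laws `PL n τ = c τ + b τ / n`, then `LE n = c* + b*/n + o(1/n)` as
`n → ∞`, where `c* = c τ*` and `b* = b τ*` for some `τ* ∈ T`. -/
theorem lower_envelope_power_law
    {T : Type*} [TopologicalSpace T] [CompactSpace T] [SeqCompactSpace T] [Nonempty T]
    (c b : T → ℝ) (hc : Continuous c) (hb : Continuous b)
    (PL : ℕ → T → ℝ) (hPL : ∀ n τ, PL n τ = c τ + b τ / n)
    (LE : ℕ → ℝ) (hLE : ∀ n : ℕ, 0 < n → IsLeast (Set.range (PL n)) (LE n)) :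
    ∃ τstar : T,
      Tendsto (fun n : ℕ => (n : ℝ) * (LE n - c τstar - b τstar / n)) atTop (𝓝 0) := by
  classical
  -- minimizer of c
  obtain ⟨τ0, -, hτ0⟩ := isCompact_univ.exists_isMinOn (Set.univ_nonempty) hc.continuousOn
  simp only [isMinOn_iff] at hτ0
  -- minimizer of b on the set where c attains its minimum
  set S : Set T := {τ | c τ ≤ c τ0} with hS
  have hScl : IsClosed S := isClosed_le hc continuous_const
  have hSne : S.Nonempty := ⟨τ0, by simp [hS]⟩
  obtain ⟨τs, hτsS, hτs⟩ := hScl.isCompact.exists_isMinOn hSne hb.continuousOn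
  simp only [isMinOn_iff] at hτs
  have hcτs : c τs = c τ0 := le_antisymm hτsS (hτ0 τs trivial)
  -- minimizer of b globally (for a lower bound on b)
  obtain ⟨τb, -, hτb⟩ := isCompact_univ.exists_isMinOn (Set.univ_nonempty) hb.continuousOn
  simp only [isMinOn_iff] at hτb
  refine ⟨τs, ?_⟩
  -- choice of minimizers
  have hmin : ∀ n : ℕ, 0 < n → ∃ τ, PL n τ = LE n := by
    intro n hn
    exact (hLE n hn).1
  set σ : ℕ → T := fun n => if h : 0 < n then (hmin n h).choose else Classical.arbitrary T
    with hσdef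
  have hσ : ∀ n : ℕ, 0 < n → c (σ n) + b (σ n) / n = LE n := by
    intro n hn
    have := (hmin n hn).choose_spec
    rw [hPL] at this
    simpa [hσdef, hn] using this
  have hle : ∀ n : ℕ, 0 < n → LE n ≤ c τs + b τs / n := by
    intro n hn
    have := (hLE n hn).2 ⟨τs, rfl⟩
    rwa [hPL] at this
  -- b (σ n) ≤ b τs for n > 0
  have hbσ : ∀ n : ℕ, 0 < n → b (σ n) ≤ b τs := by
    intro n hn
    have hnR : (0:ℝ) < n := by exact_mod_cast hn
    have h1 : c (σ n) + b (σ n) / n ≤ c τs + b τs / n := (hσ n hn) ▸ hle n hn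
    have h2 : c τs ≤ c (σ n) := hcτs ▸ hτ0 (σ n) trivial
    have h3 : b (σ n) / n ≤ b τs / n := by linarith
    exact (div_le_div_iff_of_pos_right hnR).mp h3
  -- c (σ n) ≤ c τ0 + (b τs - b τb)/n
  have hcσ : ∀ n : ℕ, 0 < n → c (σ n) ≤ c τ0 + (b τs - b τb) / n := by
    intro n hn
    have hnR : (0:ℝ) < n := by exact_mod_cast hn
    have h1 : c (σ n) + b (σ n) / n ≤ c τs + b τs / n := (hσ n hn) ▸ hle n hn
    have h2 : b τb ≤ b (σ n) := hτb _ trivial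
    have h4 : b τb / n ≤ b (σ n) / n := by gcongr
    have : c (σ n) ≤ c τs + (b τs - b τb) / n := by
      rw [sub_div] at *
      linarith
    rwa [hcτs] at this
  -- b (σ n) → b τs
  have hbtend : Tendsto (fun n => b (σ n)) atTop (𝓝 (b τs)) := by
    apply tendsto_of_subseq_tendsto
    intro ns hns
    obtain ⟨x, φ, hφ, hxφ⟩ := SeqCompactSpace.tendsto_subseq (fun k => σ (ns k))
    have hm : Tendsto (fun k => ns (φ k)) atTop atTop :=
      hns.comp hφ.tendsto_atTop
    have hmpos : ∀ᶠ k in atTop, 0 < ns (φ k) := hm.eventually_gt_atTop 0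
    -- c x ≤ c τ0
    have hcx : c x ≤ c τ0 := by
      have h1 : Tendsto (fun k => c (σ (ns (φ k)))) atTop (𝓝 (c x)) :=
        (hc.continuousAt.tendsto).comp hxφ
      have h2 : Tendsto (fun k => c τ0 + (b τs - b τb) / (ns (φ k) : ℝ)) atTop (𝓝 (c τ0)) := by
        have : Tendsto (fun k => ((ns (φ k) : ℝ))) atTop atTop :=
          tendsto_natCast_atTop_atTop.comp hm
        simpa using (tendsto_const_nhds (x := c τ0)).add
          (Tendsto.div_atTop tendsto_const_nhds this)
      refine le_of_tendsto_of_tendsto h1 h2 ?_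
      filter_upwards [hmpos] with k hk using hcσ _ hk
    -- hence b τs ≤ b x, and b x ≤ b τs
    have hbx1 : b τs ≤ b x := hτs x hcx
    have hbx2 : b x ≤ b τs := by
      have h1 : Tendsto (fun k => b (σ (ns (φ k)))) atTop (𝓝 (b x)) :=
        (hb.continuousAt.tendsto).comp hxφ
      refine le_of_tendsto h1 ?_
      filter_upwards [hmpos] with k hk using hbσ _ hk
    have hbx : b x = b τs := le_antisymm hbx2 hbx1
    exact ⟨φ, hbx ▸ (hb.continuousAt.tendsto).comp hxφ⟩
  -- squeeze
  have hlow : ∀ᶠ n : ℕ in atTop, b (σ n) - b τs ≤ (n : ℝ) * (LE n - c τs - b τs / n) := by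
    filter_upwards [eventually_gt_atTop 0] with n hn
    have hnR : (0:ℝ) < n := by exact_mod_cast hn
    have heq : (n : ℝ) * (LE n - c τs - b τs / n)
        = n * (c (σ n) - c τs) + (b (σ n) - b τs) := by
      rw [← hσ n hn]
      field_simp
      ring
    have h2 : c τs ≤ c (σ n) := hcτs ▸ hτ0 (σ n) trivial
    nlinarith
  have hhigh : ∀ᶠ n : ℕ in atTop, (n : ℝ) * (LE n - c τs - b τs / n) ≤ 0 := by
    filter_upwards [eventually_gt_atTop 0] with n hn
    have hnR : (0:ℝ) ≤ n := by positivity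
    have h1 : LE n - c τs - b τs / n ≤ 0 := by linarith [hle n hn]
    exact mul_nonpos_of_nonneg_of_nonpos hnR h1
  have hb0 : Tendsto (fun n => b (σ n) - b τs) atTop (𝓝 0) := by
    simpa using hbtend.sub (tendsto_const_nhds (x := b τs))
  exact tendsto_of_tendsto_of_tendsto_of_le_of_le' hb0 tendsto_const_nhds hlow hhigh
end

section
/- Let T be a nonempty compact metric space and let c : T → ℝ and b : T → ℝ be continuous. For each positive integer n define PL_n(τ) = c(τ) + b(τ)/n, and let τ_n ∈ T minimize PL_n over T. Suppose a subsequence τ_{n_k} converges to τ* ∈ T. Then the full sequences converge: c(τ_n) → c(τ*) with c(τ_n) nonincreasing, and b(τ_n) → b(τ*) with b(τ_n) nondecreasing; in particular c(τ_n) ≥ c(τ*) and b(τ_n) ≤ b(τ*) for all n. -/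
open Filter Topology

/-- On a nonempty compact metric space `T`, let `τ n` minimize `PL n τ = c τ + b τ / n` for
each positive integer `n`, and suppose a subsequence `τ (φ k)` converges to `τ*`. Then the
full sequences converge: `c (τ n) → c τ*` with `c (τ n)` nonincreasing, and
`b (τ n) → b τ*` with `b (τ n)` nondecreasing; in particular `c (τ n) ≥ c τ*` and
`b (τ n) ≤ b τ*` for all `n ≥ 1`. -/
theorem minimizers_converge
    {T : Type*} [MetricSpace T] [CompactSpace T] [Nonempty T]
    (c b : T → ℝ) (hc : Continuous c) (hb : Continuous b)
    (PL : ℕ → T → ℝ) (hPL : ∀ n τ, PL n τ = c τ + b τ / n)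
    (τ : ℕ → T) (hmin : ∀ n : ℕ, 0 < n → ∀ σ : T, PL n (τ n) ≤ PL n σ)
    (τstar : T) (φ : ℕ → ℕ) (hφ : StrictMono φ) (hφ1 : 0 < φ 0)
    (hconv : Tendsto (fun k => τ (φ k)) atTop (𝓝 τstar)) :
    Tendsto (fun n => c (τ n)) atTop (𝓝 (c τstar)) ∧
    (∀ m n : ℕ, 0 < n → n ≤ m → c (τ m) ≤ c (τ n)) ∧
    Tendsto (fun n => b (τ n)) atTop (𝓝 (b τstar)) ∧
    (∀ m n : ℕ, 0 < n → n ≤ m → b (τ n) ≤ b (τ m)) ∧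
    (∀ n : ℕ, 0 < n → c τstar ≤ c (τ n) ∧ b (τ n) ≤ b τstar) := by
  -- one-step monotonicity
  have key : ∀ n : ℕ, 0 < n → c (τ (n+1)) ≤ c (τ n) ∧ b (τ n) ≤ b (τ (n+1)) := by
    intro n hn
    have h1 := hmin n hn (τ (n+1))
    have h2 := hmin (n+1) (Nat.succ_pos n) (τ n)
    rw [hPL, hPL] at h1 h2
    have hn' : (0:ℝ) < (n:ℝ) := by exact_mod_cast hn
    have hn1 : (0:ℝ) < ((n:ℝ)+1) := by linarith
    have hcast : ((n+1 : ℕ) : ℝ) = (n:ℝ) + 1 := by push_cast; ring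
    rw [hcast] at h2
    have e1 : c (τ n) * n + b (τ n) ≤ c (τ (n+1)) * n + b (τ (n+1)) := by
      have := mul_le_mul_of_nonneg_right h1 hn'.le
      have hdn : b (τ n) / n * n = b (τ n) := div_mul_cancel₀ _ hn'.ne'
      have hdn' : b (τ (n+1)) / n * n = b (τ (n+1)) := div_mul_cancel₀ _ hn'.ne'
      nlinarith [this]
    have e2 : c (τ (n+1)) * ((n:ℝ)+1) + b (τ (n+1)) ≤ c (τ n) * ((n:ℝ)+1) + b (τ n) := by
      have := mul_le_mul_of_nonneg_right h2 hn1.le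
      have hdn : b (τ n) / ((n:ℝ)+1) * ((n:ℝ)+1) = b (τ n) := div_mul_cancel₀ _ hn1.ne'
      have hdn' : b (τ (n+1)) / ((n:ℝ)+1) * ((n:ℝ)+1) = b (τ (n+1)) :=
        div_mul_cancel₀ _ hn1.ne'
      nlinarith [this]
    have hcc : c (τ (n+1)) ≤ c (τ n) := by nlinarith
    have hbb : b (τ n) ≤ b (τ (n+1)) := by nlinarith [mul_nonneg (sub_nonneg.mpr hcc) hn'.le]
    exact ⟨hcc, hbb⟩
  have hcmono : ∀ m n : ℕ, 0 < n → n ≤ m → c (τ m) ≤ c (τ n) := by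
    intro m n hn hnm
    induction hnm with
    | refl => exact le_refl _
    | step h ih => exact le_trans (key _ (lt_of_lt_of_le hn h)).1 ih
  have hbmono : ∀ m n : ℕ, 0 < n → n ≤ m → b (τ n) ≤ b (τ m) := by
    intro m n hn hnm
    induction hnm with
    | refl => exact le_refl _
    | step h ih => exact le_trans ih (key _ (lt_of_lt_of_le hn h)).2
  -- subsequence facts
  have hφge1 : ∀ k, 1 ≤ φ k := fun k => le_trans hφ1 (hφ.monotone (Nat.zero_le k))
  have hφgek : ∀ k, k ≤ φ k := fun k => hφ.le_apply
  have hcsub : Tendsto (fun k => c (τ (φ k))) atTop (𝓝 (c τstar)) :=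
    (hc.tendsto τstar).comp hconv
  have hbsub : Tendsto (fun k => b (τ (φ k))) atTop (𝓝 (b τstar)) :=
    (hb.tendsto τstar).comp hconv
  -- pointwise bounds
  have hbound : ∀ n : ℕ, 0 < n → c τstar ≤ c (τ n) ∧ b (τ n) ≤ b τstar := by
    intro n hn
    constructor
    · refine le_of_tendsto hcsub (eventually_atTop.mpr ⟨n, fun k hk => ?_⟩)
      exact hcmono (φ k) n hn (le_trans hk (hφgek k))
    · refine ge_of_tendsto hbsub (eventually_atTop.mpr ⟨n, fun k hk => ?_⟩)
      exact hbmono (φ k) n hn (le_trans hk (hφgek k))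
  -- ψ : shifted subsequence indices
  set ψ : ℕ → ℕ := fun k => φ k - 1 with hψdef
  have hψadd : ∀ k, ψ k + 1 = φ k := fun k => Nat.sub_add_cancel (hφge1 k)
  have hψ : StrictMono ψ := by
    intro a bb hab
    have := hφ hab
    exact Nat.sub_lt_sub_right (hφge1 a) this
  -- convergence of b
  have hBmono : Monotone (fun k => b (τ (k+1))) := by
    intro a bb hab
    exact hbmono (bb+1) (a+1) (Nat.succ_pos a) (by omega)
  have hBsub : Tendsto (fun k => b (τ (ψ k + 1))) atTop (𝓝 (b τstar)) := by
    simpa only [hψadd] using hbsub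
  have hbtend : Tendsto (fun n => b (τ n)) atTop (𝓝 (b τstar)) := by
    rcases tendsto_of_monotone hBmono with h | ⟨l, hl⟩
    · exfalso
      have : Tendsto (fun k => b (τ (ψ k + 1))) atTop atTop := h.comp hψ.tendsto_atTop
      exact not_tendsto_atTop_of_tendsto_nhds hBsub this
    · have hl' : Tendsto (fun k => b (τ (ψ k + 1))) atTop (𝓝 l) :=
        hl.comp hψ.tendsto_atTop
      have : l = b τstar := tendsto_nhds_unique hl' hBsub
      subst this
      exact (tendsto_add_atTop_iff_nat 1).mp hl
  -- convergence of c
  have hCanti : Monotone (fun k => -c (τ (k+1))) := by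
    intro a bb hab
    simp only [neg_le_neg_iff]
    exact hcmono (bb+1) (a+1) (Nat.succ_pos a) (by omega)
  have hCsub : Tendsto (fun k => -c (τ (ψ k + 1))) atTop (𝓝 (-c τstar)) := by
    simpa only [hψadd] using hcsub.neg
  have hctend : Tendsto (fun n => c (τ n)) atTop (𝓝 (c τstar)) := by
    rcases tendsto_of_monotone hCanti with h | ⟨l, hl⟩
    · exfalso
      have : Tendsto (fun k => -c (τ (ψ k + 1))) atTop atTop := h.comp hψ.tendsto_atTop
      exact not_tendsto_atTop_of_tendsto_nhds hCsub this
    · have hl' : Tendsto (fun k => -c (τ (ψ k + 1))) atTop (𝓝 l) :=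
        hl.comp hψ.tendsto_atTop
      have : l = -c τstar := tendsto_nhds_unique hl' hCsub
      subst this
      have := (tendsto_add_atTop_iff_nat (f := fun n => -c (τ n)) 1).mp hl
      simpa using this.neg
  exact ⟨hctend, hcmono, hbtend, hbmono, hbound⟩
end

section
/- Let J be a nonempty finite index set (the dataset of objects). For each j ∈ J, let p_{j,1}, p_{j,2}, ... be independent identically distributed random variables with values in the interval [ε_j, 1] for some ε_j > 0, with mean μ_j = E[p_{j,1}] and variance σ_j² = Var(p_{j,1}) (no independence across different j is assumed). Define NLL_n = ∑_{j ∈ J} E[−log((1/n)·∑_{i=1}^n p_{j,i})]. Then NLL_n = c + b/n + O(1/n²) as n → ∞, where c = −∑_{j ∈ J} log μ_j and b = ∑_{j ∈ J} σ_j²/(2·μ_j²) ≥ 0, with b > 0 whenever σ_j² > 0 for at least one j. -/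
open MeasureTheory ProbabilityTheory


lemma NLLaux.hasDerivAt_g (μ : ℝ) (hμ : 0 < μ) {y : ℝ} (hy : 0 < y) :
    HasDerivAt (fun x => -Real.log x + Real.log μ + (x - μ)/μ - (x-μ)^2/(2*μ^2)
      + (x-μ)^3/(3*μ^3)) ((y-μ)^3/(μ^3*y)) y := by
  have hid : HasDerivAt (fun x : ℝ => x - μ) 1 y := (hasDerivAt_id y).sub_const μ
  have h1 : HasDerivAt (fun x : ℝ => -Real.log x) (-(1/y)) y := by
    have := (Real.hasDerivAt_log hy.ne').neg; rw [one_div]; exact this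
  have h2 : HasDerivAt (fun x : ℝ => (x-μ)^2) (2*(y-μ)) y := by
    have := hid.pow 2; simp at this; exact this
  have h3 : HasDerivAt (fun x : ℝ => (x-μ)^3) (3*(y-μ)^2) y := by
    have := hid.pow 3; simp at this; exact this
  have := ((((h1.add_const (Real.log μ)).add (hid.div_const μ)).sub
      (h2.div_const (2*μ^2))).add (h3.div_const (3*μ^3)))
  refine this.congr_deriv ?_
  field_simp
  ring

lemma NLLaux.nonneg_of_deriv_sign {ε μ : ℝ} (hε : 0 < ε) (hμl : ε ≤ μ) (hμu : μ ≤ 1)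
    {F F' : ℝ → ℝ} (hd : ∀ y ∈ Set.Icc ε 1, HasDerivAt F (F' y) y)
    (hFμ : F μ = 0)
    (hpos : ∀ y ∈ Set.Icc ε 1, μ ≤ y → 0 ≤ F' y)
    (hneg : ∀ y ∈ Set.Icc ε 1, y ≤ μ → F' y ≤ 0)
    {x : ℝ} (hxl : ε ≤ x) (hxu : x ≤ 1) : 0 ≤ F x := by
  rcases le_total μ x with hc | hc
  · have hmono : MonotoneOn F (Set.Icc μ 1) := by
      apply monotoneOn_of_deriv_nonneg (convex_Icc μ 1)
      · exact fun y hy =>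
          (hd y ⟨le_trans hμl hy.1, hy.2⟩).continuousAt.continuousWithinAt
      · intro y hy
        rw [interior_Icc] at hy
        exact ((hd y ⟨le_trans hμl hy.1.le, hy.2.le⟩).differentiableAt).differentiableWithinAt
      · intro y hy
        rw [interior_Icc] at hy
        rw [(hd y ⟨le_trans hμl hy.1.le, hy.2.le⟩).deriv]
        exact hpos y ⟨le_trans hμl hy.1.le, hy.2.le⟩ hy.1.le
    have := hmono ⟨le_refl μ, hμu⟩ ⟨hc, hxu⟩ hc
    rwa [hFμ] at this
  · have hanti : AntitoneOn F (Set.Icc ε μ) := by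
      apply antitoneOn_of_deriv_nonpos (convex_Icc ε μ)
      · exact fun y hy =>
          (hd y ⟨hy.1, le_trans hy.2 hμu⟩).continuousAt.continuousWithinAt
      · intro y hy
        rw [interior_Icc] at hy
        exact ((hd y ⟨hy.1.le, le_trans hy.2.le hμu⟩).differentiableAt).differentiableWithinAt
      · intro y hy
        rw [interior_Icc] at hy
        rw [(hd y ⟨hy.1.le, le_trans hy.2.le hμu⟩).deriv]
        exact hneg y ⟨hy.1.le, le_trans hy.2.le hμu⟩ hy.2.le
    have := hanti ⟨hxl, hc⟩ ⟨hμl, le_refl μ⟩ hc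
    rwa [hFμ] at this

lemma NLLaux.g_bounds {ε μ x : ℝ} (hε : 0 < ε) (hμl : ε ≤ μ) (hμu : μ ≤ 1)
    (hxl : ε ≤ x) (hxu : x ≤ 1) :
    0 ≤ -Real.log x + Real.log μ + (x - μ)/μ - (x-μ)^2/(2*μ^2) + (x-μ)^3/(3*μ^3) ∧
    -Real.log x + Real.log μ + (x - μ)/μ - (x-μ)^2/(2*μ^2) + (x-μ)^3/(3*μ^3)
      ≤ (x-μ)^4/(4*ε^4) := by
  have hμ0 : 0 < μ := lt_of_lt_of_le hε hμl
  set g : ℝ → ℝ := fun x => -Real.log x + Real.log μ + (x - μ)/μ - (x-μ)^2/(2*μ^2)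
      + (x-μ)^3/(3*μ^3) with hg
  have hgμ : g μ = 0 := by simp [hg]
  have hder : ∀ y ∈ Set.Icc ε 1, HasDerivAt g ((y-μ)^3/(μ^3*y)) y := fun y hy =>
    NLLaux.hasDerivAt_g μ hμ0 (lt_of_lt_of_le hε hy.1)
  have key : ∀ y ∈ Set.Icc ε 1, ε^4 ≤ μ^3*y := by
    intro y hy
    calc ε^4 = ε^3 * ε := by ring
      _ ≤ μ^3 * y := mul_le_mul (pow_le_pow_left₀ hε.le hμl 3) hy.1 hε.le (by positivity)
  constructor
  · apply NLLaux.nonneg_of_deriv_sign hε hμl hμu hder hgμ ?_ ?_ hxl hxu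
    · intro y hy hμy
      have hy0 : 0 < y := lt_of_lt_of_le hε hy.1
      exact div_nonneg (pow_nonneg (by linarith) 3) (by positivity)
    · intro y hy hyμ
      have hy0 : 0 < y := lt_of_lt_of_le hε hy.1
      apply div_nonpos_of_nonpos_of_nonneg _ (by positivity)
      exact Odd.pow_nonpos (by decide) (by linarith)
  · have h0 : 0 ≤ (fun x => (x-μ)^4/(4*ε^4) - g x) x := by
      apply NLLaux.nonneg_of_deriv_sign hε hμl hμu
        (F' := fun y => (y-μ)^3 * (1/ε^4 - 1/(μ^3*y))) ?_ (by simp [hgμ]) ?_ ?_ hxl hxu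
      · intro y hy
        have hy0 : 0 < y := lt_of_lt_of_le hε hy.1
        have hid : HasDerivAt (fun x : ℝ => x - μ) 1 y := (hasDerivAt_id y).sub_const μ
        have h4 : HasDerivAt (fun x : ℝ => (x-μ)^4/(4*ε^4)) ((y-μ)^3/ε^4) y := by
          have := (hid.pow 4).div_const (4*ε^4)
          refine this.congr_deriv ?_
          field_simp; ring
        have := h4.sub (hder y hy)
        refine this.congr_deriv ?_
        have : μ^3*y ≠ 0 := by positivity
        field_simp
      · intro y hy hμy
        have hy0 : 0 < y := lt_of_lt_of_le hε hy.1
        apply mul_nonneg (pow_nonneg (by linarith) 3)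
        have h1 : (0:ℝ) < ε^4 := by positivity
        have h2 : (0:ℝ) < μ^3*y := by positivity
        have := one_div_le_one_div_of_le h1 (key y hy)
        linarith
      · intro y hy hyμ
        have hy0 : 0 < y := lt_of_lt_of_le hε hy.1
        apply mul_nonpos_of_nonpos_of_nonneg
        · exact Odd.pow_nonpos (by decide) (by linarith)
        · have h1 : (0:ℝ) < ε^4 := by positivity
          have h2 : (0:ℝ) < μ^3*y := by positivity
          have := one_div_le_one_div_of_le h1 (key y hy)
          linarith
    simp only at h0
    linarith


lemma NLLaux.integrable_of_bdd {Ω : Type*} [MeasurableSpace Ω] (P : Measure Ω)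
    [IsProbabilityMeasure P] {f : Ω → ℝ} (hm : Measurable f) {C : ℝ}
    (h : ∀ ω, |f ω| ≤ C) : Integrable f P :=
  (integrable_const C).mono' hm.aestronglyMeasurable (ae_of_all _ h)

lemma NLLaux.abs_integral_le {Ω : Type*} [MeasurableSpace Ω] (P : Measure Ω)
    [IsProbabilityMeasure P] {f : Ω → ℝ} {C : ℝ} (h : ∀ ω, |f ω| ≤ C) :
    |∫ ω, f ω ∂P| ≤ C := by
  have := norm_integral_le_of_norm_le_const (μ := P) (f := f) (C := C) (ae_of_all _ h)
  simpa using this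

section Moments
variable {Ω : Type*} [MeasurableSpace Ω] (P : Measure Ω) [IsProbabilityMeasure P]

lemma NLLaux.moments
    (Y : ℕ → Ω → ℝ) (hmeasY : ∀ i, Measurable (Y i))
    (hYbd : ∀ i ω, |Y i ω| ≤ 1)
    (hindepY : iIndepFun Y P)
    (EY : ∀ i, ∫ ω, Y i ω ∂P = 0)
    (m2 m3 m4 : ℝ)
    (hm2 : ∀ i, ∫ ω, (Y i ω)^2 ∂P = m2)
    (hm3 : ∀ i, ∫ ω, (Y i ω)^3 ∂P = m3)
    (hm4 : ∀ i, ∫ ω, (Y i ω)^4 ∂P = m4)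
    (n : ℕ) :
    (∫ ω, ∑ i ∈ Finset.range n, Y i ω ∂P) = 0 ∧
    (∫ ω, (∑ i ∈ Finset.range n, Y i ω)^2 ∂P) = n * m2 ∧
    (∫ ω, (∑ i ∈ Finset.range n, Y i ω)^3 ∂P) = n * m3 ∧
    (∫ ω, (∑ i ∈ Finset.range n, Y i ω)^4 ∂P) = n * m4 + 3*n*(n-1)*m2^2 := by
  set S : ℕ → Ω → ℝ := fun n ω => ∑ i ∈ Finset.range n, Y i ω with hS
  have hintY : ∀ i, Integrable (Y i) P := fun i =>
    NLLaux.integrable_of_bdd P (hmeasY i) (hYbd i)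
  have hmeasS : ∀ m, Measurable (S m) := fun m =>
    Finset.measurable_sum _ (fun i _ => hmeasY i)
  have hSbd : ∀ m ω, |S m ω| ≤ m := by
    intro m ω
    calc |S m ω| ≤ ∑ i ∈ Finset.range m, |Y i ω| := Finset.abs_sum_le_sum_abs _ _
      _ ≤ ∑ _i ∈ Finset.range m, (1:ℝ) := Finset.sum_le_sum (fun i _ => hYbd i ω)
      _ = m := by simp
  have hYkbd : ∀ i (b : ℕ) ω, |(Y i ω)^b| ≤ 1 := by
    intro i b ω
    rw [abs_pow]
    exact pow_le_one₀ (abs_nonneg _) (hYbd i ω)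
  have hSkbd : ∀ m (a : ℕ) ω, |(S m ω)^a| ≤ (m:ℝ)^a := by
    intro m a ω
    rw [abs_pow]
    exact pow_le_pow_left₀ (abs_nonneg _) (hSbd m ω) a
  have hintSk : ∀ m (a : ℕ), Integrable (fun ω => (S m ω)^a) P := fun m a =>
    NLLaux.integrable_of_bdd P ((hmeasS m).pow_const a) (hSkbd m a)
  have hintYk : ∀ i (b : ℕ), Integrable (fun ω => (Y i ω)^b) P := fun i b =>
    NLLaux.integrable_of_bdd P ((hmeasY i).pow_const b) (hYkbd i b)
  have hintSY : ∀ m (a b : ℕ), Integrable (fun ω => (S m ω)^a * (Y m ω)^b) P := by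
    intro m a b
    apply NLLaux.integrable_of_bdd P (((hmeasS m).pow_const a).mul ((hmeasY m).pow_const b))
      (C := (m:ℝ)^a)
    intro ω
    rw [Pi.mul_apply, abs_mul]
    calc |(S m ω)^a| * |(Y m ω)^b| ≤ (m:ℝ)^a * 1 :=
          mul_le_mul (hSkbd m a ω) (hYkbd m b ω) (abs_nonneg _) (by positivity)
      _ = (m:ℝ)^a := mul_one _
  have hIndSY : ∀ m, IndepFun (S m) (Y m) P := by
    intro m
    have h := hindepY.indepFun_sum_range_succ hmeasY m
    have : (∑ j ∈ Finset.range m, Y j) = S m := by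
      funext ω; simp [hS]
    rwa [this] at h
  have hprod : ∀ m (a b : ℕ),
      ∫ ω, (S m ω)^a * (Y m ω)^b ∂P
        = (∫ ω, (S m ω)^a ∂P) * (∫ ω, (Y m ω)^b ∂P) := by
    intro m a b
    exact ((hIndSY m).comp (measurable_id.pow_const a)
      (measurable_id.pow_const b)).integral_fun_mul_eq_mul_integral
      (hintSk m a).aestronglyMeasurable (hintYk m b).aestronglyMeasurable
  induction n with
  | zero => simp [hS]
  | succ n ih =>
    obtain ⟨ih1, ih2, ih3, ih4⟩ := ih
    have hSsucc : ∀ ω, S (n+1) ω = S n ω + Y n ω := fun ω => Finset.sum_range_succ _ _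
    have hp1 : ∫ ω, (S n ω)^1 ∂P = 0 := by simpa using ih1
    have hq1 : ∫ ω, (Y n ω)^1 ∂P = 0 := by simpa using EY n
    refine ⟨?_, ?_, ?_, ?_⟩
    · have e : ∀ ω, S (n+1) ω = S n ω + Y n ω := hSsucc
      rw [integral_congr_ae (ae_of_all _ e), integral_add (hintSk n 1 |>.congr ?hc1) (hintY n)]
      case hc1 => exact ae_of_all _ (fun ω => by simp)
      rw [ih1, EY n]; ring
    · have e : ∀ ω, (S (n+1) ω)^2
          = (S n ω)^2 + (2*((S n ω)^1 * (Y n ω)^1) + (Y n ω)^2) := by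
        intro ω; rw [hSsucc]; ring
      have i1 : Integrable (fun ω => 2*((S n ω)^1 * (Y n ω)^1)) P := (hintSY n 1 1).const_mul 2
      have i2 : Integrable (fun ω => 2*((S n ω)^1 * (Y n ω)^1) + (Y n ω)^2) P :=
        i1.add (hintYk n 2)
      rw [integral_congr_ae (ae_of_all _ e),
        integral_add (hintSk n 2) i2,
        integral_add i1 (hintYk n 2),
        integral_const_mul _ _, hprod n 1 1, hp1, hq1, ih2, hm2 n]
      push_cast; ring
    · have e : ∀ ω, (S (n+1) ω)^3
          = (S n ω)^3 + (3*((S n ω)^2 * (Y n ω)^1)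
            + (3*((S n ω)^1 * (Y n ω)^2) + (Y n ω)^3)) := by
        intro ω; rw [hSsucc]; ring
      have i21 : Integrable (fun ω => 3*((S n ω)^2 * (Y n ω)^1)) P := (hintSY n 2 1).const_mul 3
      have i12 : Integrable (fun ω => 3*((S n ω)^1 * (Y n ω)^2)) P := (hintSY n 1 2).const_mul 3
      have iA : Integrable (fun ω => 3*((S n ω)^1 * (Y n ω)^2) + (Y n ω)^3) P :=
        i12.add (hintYk n 3)
      have iB : Integrable (fun ω => 3*((S n ω)^2 * (Y n ω)^1)
          + (3*((S n ω)^1 * (Y n ω)^2) + (Y n ω)^3)) P := i21.add iA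
      rw [integral_congr_ae (ae_of_all _ e),
        integral_add (hintSk n 3) iB,
        integral_add i21 iA,
        integral_add i12 (hintYk n 3),
        integral_const_mul _ _, integral_const_mul _ _, hprod n 2 1, hprod n 1 2,
        hp1, hq1, ih3, hm3 n]
      push_cast; ring
    · have e : ∀ ω, (S (n+1) ω)^4
          = (S n ω)^4 + (4*((S n ω)^3 * (Y n ω)^1)
            + (6*((S n ω)^2 * (Y n ω)^2)
            + (4*((S n ω)^1 * (Y n ω)^3) + (Y n ω)^4))) := by
        intro ω; rw [hSsucc]; ring
      have i31 : Integrable (fun ω => 4*((S n ω)^3 * (Y n ω)^1)) P := (hintSY n 3 1).const_mul 4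
      have i22 : Integrable (fun ω => 6*((S n ω)^2 * (Y n ω)^2)) P := (hintSY n 2 2).const_mul 6
      have i13 : Integrable (fun ω => 4*((S n ω)^1 * (Y n ω)^3)) P := (hintSY n 1 3).const_mul 4
      have iA : Integrable (fun ω => 4*((S n ω)^1 * (Y n ω)^3) + (Y n ω)^4) P :=
        i13.add (hintYk n 4)
      have iB : Integrable (fun ω => 6*((S n ω)^2 * (Y n ω)^2)
          + (4*((S n ω)^1 * (Y n ω)^3) + (Y n ω)^4)) P := i22.add iA
      have iC : Integrable (fun ω => 4*((S n ω)^3 * (Y n ω)^1)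
          + (6*((S n ω)^2 * (Y n ω)^2)
            + (4*((S n ω)^1 * (Y n ω)^3) + (Y n ω)^4))) P := i31.add iB
      rw [integral_congr_ae (ae_of_all _ e),
        integral_add (hintSk n 4) iC,
        integral_add i31 iB,
        integral_add i22 iA,
        integral_add i13 (hintYk n 4),
        integral_const_mul _ _, integral_const_mul _ _, integral_const_mul _ _,
        hprod n 3 1, hprod n 2 2, hprod n 1 3,
        hp1, hq1, ih2, ih4, hm2 n, hm4 n]
      push_cast; ring
end Moments

section Single
variable {Ω : Type*} [MeasurableSpace Ω] (P : Measure Ω) [IsProbabilityMeasure P]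

set_option maxHeartbeats 1000000 in
lemma NLLaux.single
    (ε : ℝ) (hε : 0 < ε) (p : ℕ → Ω → ℝ) (hmeas : ∀ i, Measurable (p i))
    (hrange : ∀ i ω, p i ω ∈ Set.Icc ε 1)
    (hindep : iIndepFun p P)
    (hident : ∀ i, IdentDistrib (p i) (p 0) P P)
    {n : ℕ} (hn : 0 < n) :
    |(∫ ω, -Real.log ((∑ i ∈ Finset.range n, p i ω) / n) ∂P)
      - (-Real.log (∫ ω, p 0 ω ∂P)) - variance (p 0) P / (2 * (∫ ω, p 0 ω ∂P)^2) / n|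
      ≤ (1/(3*ε^3) + 1/ε^4) / n^2 := by
  have hn' : (0:ℝ) < n := Nat.cast_pos.mpr hn
  have hn1 : (1:ℝ) ≤ n := Nat.one_le_cast.mpr hn
  have hnne : (n:ℝ) ≠ 0 := ne_of_gt hn'
  have hpbd : ∀ i ω, |p i ω| ≤ 1 := fun i ω =>
    abs_le.mpr ⟨by linarith [(hrange i ω).1, hε], (hrange i ω).2⟩
  have hint : ∀ i, Integrable (p i) P := fun i =>
    NLLaux.integrable_of_bdd P (hmeas i) (hpbd i)
  set μ : ℝ := ∫ ω, p 0 ω ∂P with hμdef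
  have hεμ : ε ≤ μ := by
    have : ∫ _ω, ε ∂P ≤ ∫ ω, p 0 ω ∂P :=
      integral_mono (integrable_const ε) (hint 0) (fun ω => (hrange 0 ω).1)
    simpa using this
  have hμ1 : μ ≤ 1 := by
    have : ∫ ω, p 0 ω ∂P ≤ ∫ _ω, (1:ℝ) ∂P :=
      integral_mono (hint 0) (integrable_const 1) (fun ω => (hrange 0 ω).2)
    simpa using this
  have hμ0 : 0 < μ := lt_of_lt_of_le hε hεμ
  have hμne : μ ≠ 0 := ne_of_gt hμ0
  have hε1 : ε ≤ 1 := le_trans hεμ hμ1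
  -- centered variables
  set Y : ℕ → Ω → ℝ := fun i ω => p i ω - μ with hY
  have hmeasY : ∀ i, Measurable (Y i) := fun i => (hmeas i).sub measurable_const
  have hYbd : ∀ i ω, |Y i ω| ≤ 1 := by
    intro i ω
    have h1 := (hrange i ω).1
    have h2 := (hrange i ω).2
    rw [abs_le]
    constructor <;> simp only [hY] <;> linarith
  have hindepY : iIndepFun Y P := by
    have := hindep.comp (fun _ => fun x : ℝ => x - μ)
      (fun _ => measurable_id.sub measurable_const)
    exact this
  have hidentY : ∀ i, IdentDistrib (Y i) (Y 0) P P := fun i =>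
    (hident i).comp (measurable_id.sub measurable_const)
  have hEp : ∀ i, ∫ ω, p i ω ∂P = μ := fun i => by
    rw [hμdef]; exact (hident i).integral_eq
  have EY : ∀ i, ∫ ω, Y i ω ∂P = 0 := by
    intro i
    have h : ∫ ω, (p i ω - μ) ∂P = (∫ ω, p i ω ∂P) - ∫ _ω, μ ∂P :=
      integral_sub (hint i) (integrable_const μ)
    simp only [hY]
    rw [h, hEp i]
    simp
  have hMk : ∀ (k : ℕ) i, ∫ ω, (Y i ω)^k ∂P = ∫ ω, (Y 0 ω)^k ∂P := fun k i =>
    ((hidentY i).comp (measurable_id.pow_const k)).integral_eq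
  set m2 := ∫ ω, (Y 0 ω)^2 ∂P with hm2def
  set m3 := ∫ ω, (Y 0 ω)^3 ∂P with hm3def
  set m4 := ∫ ω, (Y 0 ω)^4 ∂P with hm4def
  have hm2nonneg : 0 ≤ m2 := by
    rw [hm2def]; exact integral_nonneg (fun ω => sq_nonneg _)
  have hm4nonneg : 0 ≤ m4 := by
    rw [hm4def]; exact integral_nonneg (fun ω => even_iff_two_dvd.mpr ⟨2, rfl⟩ |>.pow_nonneg _)
  have hm2le : m2 ≤ 1 := by
    rw [hm2def]
    refine le_trans (le_abs_self _) (NLLaux.abs_integral_le P (fun ω => ?_))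
    rw [abs_pow]; exact pow_le_one₀ (abs_nonneg _) (hYbd 0 ω)
  have hm4le : m4 ≤ 1 := by
    rw [hm4def]
    refine le_trans (le_abs_self _) (NLLaux.abs_integral_le P (fun ω => ?_))
    rw [abs_pow]; exact pow_le_one₀ (abs_nonneg _) (hYbd 0 ω)
  have hm3abs : |m3| ≤ 1 := by
    rw [hm3def]
    refine NLLaux.abs_integral_le P (fun ω => ?_)
    rw [abs_pow]; exact pow_le_one₀ (abs_nonneg _) (hYbd 0 ω)
  have hvar : variance (p 0) P = m2 := by
    have hmem : MemLp (p 0) 2 P :=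
      MemLp.of_bound (hmeas 0).aestronglyMeasurable 1
        (ae_of_all _ (fun ω => by rw [Real.norm_eq_abs]; exact hpbd 0 ω))
    rw [variance_eq_integral (hmeas 0).aemeasurable, hm2def]
  have mom := NLLaux.moments P Y hmeasY hYbd hindepY EY m2 m3 m4
    (fun i => (hMk 2 i).trans hm2def.symm) (fun i => (hMk 3 i).trans hm3def.symm)
    (fun i => (hMk 4 i).trans hm4def.symm) n
  obtain ⟨mom1, mom2, mom3, mom4⟩ := mom
  -- the sample average and its range
  have hmeasSn : Measurable (fun ω => ∑ i ∈ Finset.range n, Y i ω) :=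
    Finset.measurable_sum _ (fun i _ => hmeasY i)
  have hSnbd : ∀ ω, |∑ i ∈ Finset.range n, Y i ω| ≤ n := by
    intro ω
    calc |∑ i ∈ Finset.range n, Y i ω| ≤ ∑ i ∈ Finset.range n, |Y i ω| :=
        Finset.abs_sum_le_sum_abs _ _
      _ ≤ ∑ _i ∈ Finset.range n, (1:ℝ) := Finset.sum_le_sum (fun i _ => hYbd i ω)
      _ = n := by simp
  have hAS : ∀ ω, (∑ i ∈ Finset.range n, p i ω) / n - μ
      = (∑ i ∈ Finset.range n, Y i ω) / n := by
    intro ω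
    have h : ∑ i ∈ Finset.range n, Y i ω = (∑ i ∈ Finset.range n, p i ω) - n * μ := by
      simp only [hY]
      rw [Finset.sum_sub_distrib]
      simp [Finset.card_range, nsmul_eq_mul]
    rw [h]
    field_simp
  have hArange : ∀ ω, ε ≤ (∑ i ∈ Finset.range n, p i ω) / n
      ∧ (∑ i ∈ Finset.range n, p i ω) / n ≤ 1 := by
    intro ω
    constructor
    · rw [le_div_iff₀ hn']
      calc ε * n = ∑ _i ∈ Finset.range n, ε := by
            simp [Finset.sum_const, Finset.card_range, nsmul_eq_mul, mul_comm]
        _ ≤ ∑ i ∈ Finset.range n, p i ω := Finset.sum_le_sum (fun i _ => (hrange i ω).1)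
    · rw [div_le_one hn']
      calc ∑ i ∈ Finset.range n, p i ω ≤ ∑ _i ∈ Finset.range n, (1:ℝ) :=
            Finset.sum_le_sum (fun i _ => (hrange i ω).2)
        _ = n := by simp
  -- Taylor remainder function
  set G : Ω → ℝ := fun ω => -Real.log ((∑ i ∈ Finset.range n, p i ω) / n) + Real.log μ
      + ((∑ i ∈ Finset.range n, p i ω)/n - μ)/μ
      - ((∑ i ∈ Finset.range n, p i ω)/n - μ)^2/(2*μ^2)
      + ((∑ i ∈ Finset.range n, p i ω)/n - μ)^3/(3*μ^3) with hG
  have hGbounds : ∀ ω, 0 ≤ G ω ∧ G ω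
      ≤ ((∑ i ∈ Finset.range n, p i ω)/n - μ)^4/(4*ε^4) := fun ω =>
    NLLaux.g_bounds hε hεμ hμ1 (hArange ω).1 (hArange ω).2
  have hmeasA : Measurable (fun ω => (∑ i ∈ Finset.range n, p i ω) / (n:ℝ)) :=
    (Finset.measurable_sum _ (fun i _ => hmeas i)).div_const _
  have hmeasG : Measurable G := by
    rw [hG]
    refine Measurable.add (Measurable.sub (Measurable.add (Measurable.add ?_
      measurable_const) ?_) ?_) ?_
    · exact (Real.measurable_log.comp hmeasA).neg
    · exact (hmeasA.sub_const μ).div_const μ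
    · exact ((hmeasA.sub_const μ).pow_const 2).div_const _
    · exact ((hmeasA.sub_const μ).pow_const 3).div_const _
  have hAμbd : ∀ ω, |(∑ i ∈ Finset.range n, p i ω)/n - μ| ≤ 1 := by
    intro ω
    have h1 := (hArange ω).1
    have h2 := (hArange ω).2
    rw [abs_le]
    constructor <;> linarith
  have hGbd : ∀ ω, |G ω| ≤ 1/(4*ε^4) := by
    intro ω
    rw [abs_of_nonneg (hGbounds ω).1]
    refine le_trans (hGbounds ω).2 ?_
    have h4 : ((∑ i ∈ Finset.range n, p i ω)/n - μ)^4 ≤ 1 := by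
      calc ((∑ i ∈ Finset.range n, p i ω)/n - μ)^4
          ≤ |((∑ i ∈ Finset.range n, p i ω)/n - μ)^4| := le_abs_self _
        _ = |(∑ i ∈ Finset.range n, p i ω)/n - μ|^4 := abs_pow _ _
        _ ≤ 1 := pow_le_one₀ (abs_nonneg _) (hAμbd ω)
    have hd : (0:ℝ) < 4*ε^4 := by positivity
    gcongr
  have hintG : Integrable G P := NLLaux.integrable_of_bdd P hmeasG hGbd
  -- pointwise decomposition
  have hpt : ∀ ω, -Real.log ((∑ i ∈ Finset.range n, p i ω) / n)
      = G ω + (-Real.log μ + (-(1/(μ*n))) * (∑ i ∈ Finset.range n, Y i ω)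
        + (1/(2*μ^2*n^2)) * (∑ i ∈ Finset.range n, Y i ω)^2
        + (-(1/(3*μ^3*n^3))) * (∑ i ∈ Finset.range n, Y i ω)^3) := by
    intro ω
    have h1 := hAS ω
    simp only [hG]
    rw [h1]
    field_simp
    ring
  have hintS1 : Integrable (fun ω => (∑ i ∈ Finset.range n, Y i ω)) P :=
    NLLaux.integrable_of_bdd P hmeasSn hSnbd
  have hintS2 : Integrable (fun ω => (∑ i ∈ Finset.range n, Y i ω)^2) P :=
    NLLaux.integrable_of_bdd P (hmeasSn.pow_const 2)
      (fun ω => by rw [abs_pow]; exact pow_le_pow_left₀ (abs_nonneg _) (hSnbd ω) 2)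
  have hintS3 : Integrable (fun ω => (∑ i ∈ Finset.range n, Y i ω)^3) P :=
    NLLaux.integrable_of_bdd P (hmeasSn.pow_const 3)
      (fun ω => by rw [abs_pow]; exact pow_le_pow_left₀ (abs_nonneg _) (hSnbd ω) 3)
  have hintS4 : Integrable (fun ω => (∑ i ∈ Finset.range n, Y i ω)^4) P :=
    NLLaux.integrable_of_bdd P (hmeasSn.pow_const 4)
      (fun ω => by rw [abs_pow]; exact pow_le_pow_left₀ (abs_nonneg _) (hSnbd ω) 4)
  have ic1 : Integrable (fun ω => (-(1/(μ*(n:ℝ)))) * (∑ i ∈ Finset.range n, Y i ω)) P :=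
    hintS1.const_mul _
  have ic2 : Integrable (fun ω => (1/(2*μ^2*(n:ℝ)^2)) * (∑ i ∈ Finset.range n, Y i ω)^2) P :=
    hintS2.const_mul _
  have ic3 : Integrable (fun ω => (-(1/(3*μ^3*(n:ℝ)^3))) * (∑ i ∈ Finset.range n, Y i ω)^3) P :=
    hintS3.const_mul _
  have iconst : Integrable (fun _ω : Ω => -Real.log μ) P := integrable_const _
  have iA : Integrable (fun ω => -Real.log μ
      + (-(1/(μ*(n:ℝ)))) * (∑ i ∈ Finset.range n, Y i ω)) P := iconst.add ic1
  have iB : Integrable (fun ω => -Real.log μ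
      + (-(1/(μ*(n:ℝ)))) * (∑ i ∈ Finset.range n, Y i ω)
      + (1/(2*μ^2*(n:ℝ)^2)) * (∑ i ∈ Finset.range n, Y i ω)^2) P := iA.add ic2
  have iC : Integrable (fun ω => -Real.log μ
      + (-(1/(μ*(n:ℝ)))) * (∑ i ∈ Finset.range n, Y i ω)
      + (1/(2*μ^2*(n:ℝ)^2)) * (∑ i ∈ Finset.range n, Y i ω)^2
      + (-(1/(3*μ^3*(n:ℝ)^3))) * (∑ i ∈ Finset.range n, Y i ω)^3) P := iB.add ic3
  have keyeq : ∫ ω, -Real.log ((∑ i ∈ Finset.range n, p i ω) / n) ∂P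
      = (∫ ω, G ω ∂P) + (-Real.log μ + (1/(2*μ^2*(n:ℝ)^2)) * ((n:ℝ)*m2)
        + (-(1/(3*μ^3*(n:ℝ)^3))) * ((n:ℝ)*m3)) := by
    rw [integral_congr_ae (ae_of_all _ hpt), integral_add hintG iC,
      integral_add iB ic3, integral_add iA ic2, integral_add iconst ic1,
      integral_const_mul _ _, integral_const_mul _ _, integral_const_mul _ _,
      mom1, mom2, mom3, integral_const]
    simp [measure_univ]
  have hfinal : (∫ ω, -Real.log ((∑ i ∈ Finset.range n, p i ω) / n) ∂P)
      - (-Real.log μ) - m2/(2*μ^2)/n = (∫ ω, G ω ∂P) + (-(m3/(3*μ^3*(n:ℝ)^2))) := by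
    rw [keyeq]
    field_simp
    ring
  have hIG0 : 0 ≤ ∫ ω, G ω ∂P := integral_nonneg (fun ω => (hGbounds ω).1)
  have hIGle : (∫ ω, G ω ∂P) ≤ 1/(ε^4*(n:ℝ)^2) := by
    have hle : ∀ ω, G ω ≤ (∑ i ∈ Finset.range n, Y i ω)^4 / (4*ε^4*(n:ℝ)^4) := by
      intro ω
      have h2 := (hGbounds ω).2
      rw [hAS ω] at h2
      have e : ((∑ i ∈ Finset.range n, Y i ω)/(n:ℝ))^4/(4*ε^4)
          = (∑ i ∈ Finset.range n, Y i ω)^4/(4*ε^4*(n:ℝ)^4) := by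
        rw [div_pow, div_div]
        congr 1
        ring
      rw [e] at h2
      exact h2
    have hic : Integrable (fun ω => (∑ i ∈ Finset.range n, Y i ω)^4 / (4*ε^4*(n:ℝ)^4)) P :=
      hintS4.div_const _
    have hmono := integral_mono hintG hic hle
    rw [integral_div, mom4] at hmono
    refine le_trans hmono ?_
    have hx : (n:ℝ)*m4 + 3*(n:ℝ)*((n:ℝ)-1)*m2^2 ≤ 4*(n:ℝ)^2 := by
      have hnn : (0:ℝ) ≤ 3*(n:ℝ)*((n:ℝ)-1) := by nlinarith
      have h2' : 3*(n:ℝ)*((n:ℝ)-1)*m2^2 ≤ 3*(n:ℝ)*((n:ℝ)-1) := by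
        nlinarith [mul_nonneg hnn (show (0:ℝ) ≤ 1 - m2^2 by nlinarith)]
      have h1' : (n:ℝ)*m4 ≤ (n:ℝ) := by nlinarith
      nlinarith [sq_nonneg ((n:ℝ))]
    have heq : (1:ℝ)/(ε^4*(n:ℝ)^2) = (4*(n:ℝ)^2)/(4*ε^4*(n:ℝ)^4) := by
      field_simp
    rw [heq]
    gcongr
  have hm3term : |m3/(3*μ^3*(n:ℝ)^2)| ≤ 1/(3*ε^3*(n:ℝ)^2) := by
    rw [abs_div, abs_of_pos (show (0:ℝ) < 3*μ^3*(n:ℝ)^2 by positivity)]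
    refine div_le_div₀ (by norm_num) hm3abs (by positivity) ?_
    gcongr
  have final2 : |(∫ ω, G ω ∂P) + (-(m3/(3*μ^3*(n:ℝ)^2)))|
      ≤ 1/(ε^4*(n:ℝ)^2) + 1/(3*ε^3*(n:ℝ)^2) := by
    refine le_trans (abs_add_le _ _) ?_
    rw [abs_of_nonneg hIG0, abs_neg]
    exact add_le_add hIGle hm3term
  rw [hvar, hfinal]
  refine le_trans final2 (le_of_eq ?_)
  field_simp
  ring
end Single

/-- Dataset-level consequence of Proposition 1: if, for every object `j` of a nonempty finite
dataset `J`, the correct-class probabilities `p j i` are i.i.d. in `i` with values in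
`[ε j, 1]`, `ε j > 0`, mean `μ j` and variance `σ j ²`, then
`NLL_n = ∑_j E[-log p̄_{j,n}]` satisfies `NLL_n = c + b/n + O(1/n²)` with
`c = -∑_j log (μ j)`, `b = ∑_j σ j ²/(2 μ j ²) ≥ 0`, and `b > 0` whenever some `σ j ² > 0`. -/
theorem dataset_nll_power_law
    {Ω : Type*} [MeasurableSpace Ω] (P : Measure Ω) [IsProbabilityMeasure P]
    {J : Type*} [Fintype J] [Nonempty J]
    (ε : J → ℝ) (hε : ∀ j, 0 < ε j)
    (p : J → ℕ → Ω → ℝ) (hmeas : ∀ j i, Measurable (p j i))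
    (hrange : ∀ j i ω, p j i ω ∈ Set.Icc (ε j) 1)
    (hindep : ∀ j, iIndepFun (p j) P)
    (hident : ∀ j i, IdentDistrib (p j i) (p j 0) P P)
    (μ σ2 : J → ℝ) (hμ : ∀ j, μ j = ∫ ω, p j 0 ω ∂P)
    (hσ2 : ∀ j, σ2 j = variance (p j 0) P)
    (c b : ℝ) (hc : c = -∑ j, Real.log (μ j)) (hb : b = ∑ j, σ2 j / (2 * μ j ^ 2)) :
    (∃ C > (0 : ℝ), ∀ n : ℕ, 0 < n →
      |(∑ j, ∫ ω, -Real.log ((∑ i ∈ Finset.range n, p j i ω) / n) ∂P) - c - b / n|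
        ≤ C / (n : ℝ) ^ 2) ∧
    0 ≤ b ∧ ((∃ j, 0 < σ2 j) → 0 < b) := by
  have hσ2nonneg : ∀ j, 0 ≤ σ2 j := fun j => (hσ2 j) ▸ variance_nonneg _ _
  have hμ0 : ∀ j, 0 < μ j := by
    intro j
    have hint : Integrable (p j 0) P := NLLaux.integrable_of_bdd P (hmeas j 0)
      (C := 1) (fun ω => abs_le.mpr ⟨by linarith [(hrange j 0 ω).1, hε j], (hrange j 0 ω).2⟩)
    have : ∫ _ω, ε j ∂P ≤ ∫ ω, p j 0 ω ∂P :=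
      integral_mono (integrable_const _) hint (fun ω => (hrange j 0 ω).1)
    rw [← hμ j] at this
    simp only [integral_const, measure_univ, ENNReal.toReal_one, probReal_univ, one_smul] at this
    linarith [hε j]
  have hterm_nonneg : ∀ j, 0 ≤ σ2 j / (2 * μ j ^ 2) := fun j =>
    div_nonneg (hσ2nonneg j) (by have := hμ0 j; positivity)
  have hbnonneg : 0 ≤ b := hb ▸ Finset.sum_nonneg (fun j _ => hterm_nonneg j)
  have hbpos : (∃ j, 0 < σ2 j) → 0 < b := by
    rintro ⟨j, hj⟩
    rw [hb]
    exact Finset.sum_pos' (fun i _ => hterm_nonneg i)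
      ⟨j, Finset.mem_univ j, div_pos hj (by have := hμ0 j; positivity)⟩
  refine ⟨?_, hbnonneg, hbpos⟩
  refine ⟨∑ j, (1/(3*(ε j)^3) + 1/(ε j)^4), ?_, ?_⟩
  · exact Finset.sum_pos (fun j _ => by have := hε j; positivity) Finset.univ_nonempty
  · intro n hn
    have hsingle : ∀ j, |(∫ ω, -Real.log ((∑ i ∈ Finset.range n, p j i ω) / n) ∂P)
        - (-Real.log (μ j)) - σ2 j / (2 * (μ j)^2) / n|
        ≤ (1/(3*(ε j)^3) + 1/(ε j)^4) / (n:ℝ)^2 := by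
      intro j
      have h := NLLaux.single P (ε j) (hε j) (p j) (hmeas j) (hrange j)
        (hindep j) (hident j) hn
      rw [← hμ j, ← hσ2 j] at h
      exact h
    have hsum : (∑ j, ∫ ω, -Real.log ((∑ i ∈ Finset.range n, p j i ω) / n) ∂P) - c - b/n
        = ∑ j, ((∫ ω, -Real.log ((∑ i ∈ Finset.range n, p j i ω) / n) ∂P)
            - (-Real.log (μ j)) - σ2 j / (2 * (μ j)^2) / n) := by
      rw [hc, hb, Finset.sum_sub_distrib, Finset.sum_sub_distrib, Finset.sum_div,
        Finset.sum_neg_distrib]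
    rw [hsum]
    calc |∑ j, ((∫ ω, -Real.log ((∑ i ∈ Finset.range n, p j i ω) / n) ∂P)
            - (-Real.log (μ j)) - σ2 j / (2 * (μ j)^2) / n)|
        ≤ ∑ j, |(∫ ω, -Real.log ((∑ i ∈ Finset.range n, p j i ω) / n) ∂P)
            - (-Real.log (μ j)) - σ2 j / (2 * (μ j)^2) / n| :=
          Finset.abs_sum_le_sum_abs _ _
      _ ≤ ∑ j, (1/(3*(ε j)^3) + 1/(ε j)^4) / (n:ℝ)^2 :=
          Finset.sum_le_sum (fun j _ => hsingle j)
      _ = (∑ j, (1/(3*(ε j)^3) + 1/(ε j)^4)) / (n:ℝ)^2 := by rw [Finset.sum_div]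
end
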